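/- arXiv:1809.07200 — 3 statements merged into one kernel-verified Lean document; each statement's English description precedes it below -/
import Mathlib

section
/- (Consequence of the Brelot–Choquet theorem, answering Problem 3.25.) There is no nonzero harmonic polynomial in three real variables divisible by x₁⁴ + x₂⁴ + x₃⁴: if P ∈ ℝ[x₁, x₂, x₃] satisfies ∂²P/∂x₁² + ∂²P/∂x₂² + ∂²P/∂x₃² = 0 (as a polynomial identity) and (x₁⁴ + x₂⁴ + x₃⁴) divides P in ℝ[x₁, x₂, x₃], then P = 0. -/
open MvPolynomial Real MeasureTheory

namespace BCaux

/-- normalized 1-d Gaussian moments: `mom a = (∫ x^a e^{-x²})/√π`. -/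
noncomputable def mom : ℕ → ℝ
  | 0 => 1
  | 1 => 0
  | (a+2) => (a+1)/2 * mom a

lemma mom_rec (a : ℕ) : ((a:ℝ)+1) * mom a = 2 * mom (a+2) := by
  rw [show mom (a+2) = (a+1)/2 * mom a from rfl]; ring

lemma mom_step (a : ℕ) : (a : ℝ) * mom (a - 1) = 2 * mom (a + 1) := by
  cases a with
  | zero => simp [mom]
  | succ b =>
      have := mom_rec b
      push_cast at this ⊢
      simpa using this

lemma integrable_pow_gauss (a : ℕ) :
    Integrable fun x : ℝ => x ^ a * Real.exp (-x ^ 2) := by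
  have h : (-1:ℝ) < (a:ℝ) := lt_of_lt_of_le (by norm_num) (Nat.cast_nonneg a)
  simpa [Real.rpow_natCast, neg_mul, one_mul]
    using integrable_rpow_mul_exp_neg_mul_sq (b := 1) one_pos h

lemma integral_pow_gauss (a : ℕ) :
    ∫ x : ℝ, x ^ a * Real.exp (-x ^ 2) = mom a * √π := by
  induction a using Nat.strong_induction_on with
  | _ a ih =>
    match a with
    | 0 =>
        simp only [pow_zero, one_mul, mom]
        simpa [neg_mul, one_mul] using integral_gaussian 1
    | 1 =>
        have hd : ∀ x : ℝ, HasDerivAt (fun x : ℝ => -(1/2) * Real.exp (-x ^ 2))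
            (x ^ 1 * Real.exp (-x ^ 2)) x := by
          intro x
          have h1 : HasDerivAt (fun x : ℝ => -x ^ 2) (-(2 * x ^ 1)) x :=
            (hasDerivAt_pow 2 x).neg
          have := (h1.exp).const_mul (-(1/2) : ℝ)
          refine this.congr_deriv ?_; ring
        have h0 := integral_eq_zero_of_hasDerivAt_of_integrable hd
          (integrable_pow_gauss 1)
          (by simpa [neg_mul, one_mul]
            using (integrable_exp_neg_mul_sq one_pos).const_mul (-(1/2) : ℝ))
        rw [h0]; simp [mom]
    | (b+2) =>
        have hd : ∀ x : ℝ, HasDerivAt (fun x : ℝ => x ^ (b+1) * Real.exp (-x ^ 2))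
            (((b:ℝ)+1) * (x ^ b * Real.exp (-x ^ 2))
              - 2 * (x ^ (b+2) * Real.exp (-x ^ 2))) x := by
          intro x
          have h1 : HasDerivAt (fun x : ℝ => -x ^ 2) (-(2 * x ^ 1)) x :=
            (hasDerivAt_pow 2 x).neg
          have h2 := (hasDerivAt_pow (b+1) x).mul h1.exp
          refine h2.congr_deriv ?_
          push_cast
          ring
        have hint : Integrable fun x : ℝ =>
            ((b:ℝ)+1) * (x ^ b * Real.exp (-x ^ 2))
              - 2 * (x ^ (b+2) * Real.exp (-x ^ 2)) :=
          ((integrable_pow_gauss b).const_mul _).sub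
            ((integrable_pow_gauss (b+2)).const_mul 2)
        have h0 := integral_eq_zero_of_hasDerivAt_of_integrable hd hint
          (integrable_pow_gauss (b+1))
        rw [integral_sub ((integrable_pow_gauss b).const_mul _)
            ((integrable_pow_gauss (b+2)).const_mul 2),
          integral_const_mul, integral_const_mul, ih b (by omega)] at h0
        have : (2:ℝ) * ∫ x : ℝ, x ^ (b+2) * Real.exp (-x ^ 2)
            = ((b:ℝ)+1) * (mom b * √π) := by linarith
        have h2 := mom_rec b
        rw [show mom (b+2) = (b+1)/2 * mom b from rfl]
        linarith

noncomputable def Mo (d : Fin 3 →₀ ℕ) : ℝ := ∏ i : Fin 3, mom (d i)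

noncomputable def L (f : MvPolynomial (Fin 3) ℝ) : ℝ := ∑ d ∈ f.support, coeff d f * Mo d

lemma L_eq_sum {f : MvPolynomial (Fin 3) ℝ} {s : Finset (Fin 3 →₀ ℕ)}
    (h : f.support ⊆ s) : L f = ∑ d ∈ s, coeff d f * Mo d := by
  refine Finset.sum_subset h fun d _ hd => ?_
  rw [MvPolynomial.notMem_support_iff.mp hd, zero_mul]

@[simp] lemma L_zero : L 0 = 0 := by simp [L]

lemma L_add (f g : MvPolynomial (Fin 3) ℝ) : L (f + g) = L f + L g := by
  rw [L_eq_sum (s := f.support ∪ g.support) MvPolynomial.support_add,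
    L_eq_sum (s := f.support ∪ g.support) Finset.subset_union_left,
    L_eq_sum (s := f.support ∪ g.support) Finset.subset_union_right,
    ← Finset.sum_add_distrib]
  refine Finset.sum_congr rfl fun d _ => ?_
  rw [coeff_add]; ring

lemma L_smul (c : ℝ) (f : MvPolynomial (Fin 3) ℝ) : L (c • f) = c * L f := by
  rw [L_eq_sum (s := f.support) MvPolynomial.support_smul, L, Finset.mul_sum]
  refine Finset.sum_congr rfl fun d _ => ?_
  rw [MvPolynomial.coeff_smul]; simp [mul_assoc]

lemma L_finset_sum {ι : Type*} (s : Finset ι) (F : ι → MvPolynomial (Fin 3) ℝ) :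
    L (∑ i ∈ s, F i) = ∑ i ∈ s, L (F i) := by
  classical
  induction s using Finset.cons_induction with
  | empty => simp
  | cons a s ha ih => rw [Finset.sum_cons, Finset.sum_cons, L_add, ih]

lemma L_monomial (d : Fin 3 →₀ ℕ) (c : ℝ) : L (monomial d c) = c * Mo d := by
  rcases eq_or_ne c 0 with rfl | hc
  · simp
  · simp [L, support_monomial, hc]

lemma Mo_eq (d : Fin 3 →₀ ℕ) (i : Fin 3) :
    Mo d = mom (d i) * ∏ j ∈ Finset.univ.erase i, mom (d j) :=
  (Finset.mul_prod_erase Finset.univ _ (Finset.mem_univ i)).symm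

/-- The key adjointness identity. -/
lemma L_pderiv (i : Fin 3) (f : MvPolynomial (Fin 3) ℝ) :
    L (pderiv i f) = 2 * L (X i * f) := by
  induction f using MvPolynomial.induction_on' with
  | add p q hp hq => rw [map_add, mul_add, L_add, L_add, hp, hq, mul_add]
  | monomial d c =>
    rw [pderiv_monomial, show (X i : MvPolynomial (Fin 3) ℝ) = monomial (Finsupp.single i 1) 1 by
        rw [← X_pow_eq_monomial, pow_one],
      monomial_mul, one_mul, L_monomial, L_monomial]
    have h1 : Mo (d - Finsupp.single i 1)
        = mom (d i - 1) * ∏ j ∈ Finset.univ.erase i, mom (d j) := by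
      rw [Mo_eq _ i, Finsupp.tsub_apply, Finsupp.single_apply, if_pos rfl]
      congr 1
      refine Finset.prod_congr rfl fun j hj => ?_
      rw [Finsupp.tsub_apply, Finsupp.single_apply, if_neg (Finset.ne_of_mem_erase hj).symm,
        Nat.sub_zero]
    have h2 : Mo (Finsupp.single i 1 + d)
        = mom (d i + 1) * ∏ j ∈ Finset.univ.erase i, mom (d j) := by
      rw [Mo_eq _ i, Finsupp.add_apply, Finsupp.single_apply, if_pos rfl, add_comm 1 (d i)]
      congr 1
      refine Finset.prod_congr rfl fun j hj => ?_
      rw [Finsupp.add_apply, Finsupp.single_apply, if_neg (Finset.ne_of_mem_erase hj).symm,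
        zero_add]
    rw [h1, h2]
    have h := mom_step (d i)
    linear_combination (c * ∏ j ∈ Finset.univ.erase i, mom (d j)) * h

lemma degree_eq_sum_univ (d : Fin 3 →₀ ℕ) : d.degree = ∑ i : Fin 3, d i :=
  Finset.sum_subset (Finset.subset_univ _)
    (fun i _ hi => Finsupp.notMem_support_iff.mp hi)

/-- Euler's identity on monomials. -/
lemma X_mul_pderiv_monomial (i : Fin 3) (d : Fin 3 →₀ ℕ) (c : ℝ) :
    X i * pderiv i (monomial d c) = monomial d (c * d i) := by
  rw [pderiv_monomial, show (X i : MvPolynomial (Fin 3) ℝ) = monomial (Finsupp.single i 1) 1 by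
      rw [← X_pow_eq_monomial, pow_one], monomial_mul, one_mul]
  rcases Nat.eq_zero_or_pos (d i) with h | h
  · rw [h]; simp
  · have hd : Finsupp.single i 1 + (d - Finsupp.single i 1) = d := by
      ext j
      rcases eq_or_ne j i with rfl | hj
      · simp only [Finsupp.add_apply, Finsupp.tsub_apply, Finsupp.single_apply, if_pos rfl,
          if_true]
        omega
      · simp only [Finsupp.add_apply, Finsupp.tsub_apply, Finsupp.single_apply,
          if_neg (Ne.symm hj)]
        omega
    rw [hd]

lemma euler {n : ℕ} {f : MvPolynomial (Fin 3) ℝ} (hf : f.IsHomogeneous n) :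
    ∑ i : Fin 3, X i * pderiv i f = (n : ℝ) • f := by
  conv_lhs => rw [f.as_sum]
  conv_rhs => rw [f.as_sum]
  rw [Finset.smul_sum]
  simp only [map_sum, Finset.mul_sum]
  rw [Finset.sum_comm]
  refine Finset.sum_congr rfl fun d hd => ?_
  have hdeg : d.degree = n := by
    by_contra h
    exact MvPolynomial.mem_support_iff.mp hd (hf.coeff_eq_zero h)
  simp only [X_mul_pderiv_monomial]
  rw [← map_sum (monomial d), smul_monomial]
  congr 1
  rw [← Finset.mul_sum]
  rw [degree_eq_sum_univ] at hdeg
  have : (∑ i : Fin 3, ((d i : ℕ) : ℝ)) = (n : ℝ) := by push_cast [← hdeg]; rfl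
  rw [this, mul_comm, smul_eq_mul]

noncomputable def lap (f : MvPolynomial (Fin 3) ℝ) : MvPolynomial (Fin 3) ℝ :=
  ∑ i : Fin 3, pderiv i (pderiv i f)

lemma lap_add (f g : MvPolynomial (Fin 3) ℝ) : lap (f + g) = lap f + lap g := by
  simp [lap, map_add, Finset.sum_add_distrib]

lemma lap_finset_sum {ι : Type*} (s : Finset ι) (F : ι → MvPolynomial (Fin 3) ℝ) :
    lap (∑ i ∈ s, F i) = ∑ i ∈ s, lap (F i) := by
  classical
  induction s using Finset.cons_induction with
  | empty => simp [lap]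
  | cons a s ha ih => rw [Finset.sum_cons, Finset.sum_cons, lap_add, ih]

lemma pderiv_comm (i j : Fin 3) (f : MvPolynomial (Fin 3) ℝ) :
    pderiv i (pderiv j f) = pderiv j (pderiv i f) := by
  induction f using MvPolynomial.induction_on' with
  | add p q hp hq => simp [map_add, hp, hq]
  | monomial d c =>
    rcases eq_or_ne i j with rfl | hij
    · rfl
    · simp only [pderiv_monomial]
      have e1 : ∀ (a b : Fin 3), a ≠ b → ((d - (Finsupp.single b 1 : Fin 3 →₀ ℕ)) a) = d a := by
        intro a b hab
        rw [Finsupp.tsub_apply, Finsupp.single_apply, if_neg (Ne.symm hab), Nat.sub_zero]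
      rw [e1 i j hij, e1 j i (Ne.symm hij), tsub_tsub, tsub_tsub, add_comm]
      congr 1
      push_cast
      ring

lemma lap_pderiv (i : Fin 3) (f : MvPolynomial (Fin 3) ℝ) :
    lap (pderiv i f) = pderiv i (lap f) := by
  rw [lap, lap, map_sum]
  refine Finset.sum_congr rfl fun j _ => ?_
  rw [pderiv_comm j i f, pderiv_comm j i (pderiv j f)]

lemma single_add_tsub {d : Fin 3 →₀ ℕ} {i : Fin 3} (h : d i ≠ 0) :
    Finsupp.single i 1 + (d - Finsupp.single i 1) = d := by
  ext j
  rcases eq_or_ne j i with rfl | hj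
  · simp only [Finsupp.add_apply, Finsupp.tsub_apply, Finsupp.single_apply, if_pos rfl, if_true]
    omega
  · simp only [Finsupp.add_apply, Finsupp.tsub_apply, Finsupp.single_apply,
      if_neg (Ne.symm hj)]
    omega

lemma degree_tsub_single {d : Fin 3 →₀ ℕ} {i : Fin 3} (h : d i ≠ 0) :
    (d - Finsupp.single i 1).degree = d.degree - 1 := by
  rw [degree_eq_sum_univ, degree_eq_sum_univ]
  rw [show (∑ j : Fin 3, d j) = ∑ j : Fin 3, ((d - (Finsupp.single i 1 : Fin 3 →₀ ℕ)) j
      + ((Finsupp.single i 1 : Fin 3 →₀ ℕ)) j) from Finset.sum_congr rfl fun j _ => by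
    conv_lhs => rw [← single_add_tsub h]
    rw [Finsupp.add_apply, add_comm]]
  rw [Finset.sum_add_distrib]
  have : (∑ j : Fin 3, ((Finsupp.single i 1 : Fin 3 →₀ ℕ)) j) = 1 := by
    rw [Finset.sum_eq_single i]
    · simp
    · intro b _ hb; rw [Finsupp.single_apply, if_neg (Ne.symm hb)]
    · intro hb; exact absurd (Finset.mem_univ i) hb
  omega

lemma pderiv_isHomogeneous {n : ℕ} {f : MvPolynomial (Fin 3) ℝ}
    (h : f.IsHomogeneous n) (i : Fin 3) : (pderiv i f).IsHomogeneous (n - 1) := by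
  conv_lhs => rw [f.as_sum, map_sum]
  apply IsHomogeneous.sum
  intro d hd
  rw [pderiv_monomial]
  rcases Nat.eq_zero_or_pos (d i) with h0 | h0
  · rw [h0]
    simpa using isHomogeneous_zero (Fin 3) ℝ (n - 1)
  · apply isHomogeneous_monomial
    have hdd : d.degree = n := by
      by_contra hne
      exact MvPolynomial.mem_support_iff.mp hd (h.coeff_eq_zero hne)
    rw [degree_tsub_single (by omega), hdd]

lemma L_lap {n : ℕ} {f : MvPolynomial (Fin 3) ℝ} (hf : f.IsHomogeneous n) :
    L (lap f) = 2 * n * L f := by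
  rw [lap, L_finset_sum,
    Finset.sum_congr rfl (fun i _ => L_pderiv i (pderiv i f)),
    ← Finset.mul_sum, ← L_finset_sum, euler hf, L_smul]
  ring

lemma L_harmonic {n : ℕ} {P : MvPolynomial (Fin 3) ℝ} (hP : lap P = 0) (hn : 0 < n)
    (h : P.IsHomogeneous n) : L P = 0 := by
  have h2 := L_lap h
  rw [hP, L_zero] at h2
  have hn' : (0:ℝ) < 2 * n := by positivity
  nlinarith [h2]

lemma ortho (k : ℕ) : ∀ n : ℕ, k < n → ∀ P : MvPolynomial (Fin 3) ℝ, lap P = 0 →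
    P.IsHomogeneous n → ∀ d : Fin 3 →₀ ℕ, ∀ c : ℝ, d.degree = k →
    L (P * monomial d c) = 0 := by
  induction k using Nat.strong_induction_on with
  | _ k IH =>
    intro n hkn P hlap hhom d c hdeg
    rcases Nat.eq_zero_or_pos k with rfl | hk
    · have hd0 : d = 0 := (Finsupp.degree_eq_zero_iff d).mp hdeg
      subst hd0
      rw [monomial_zero', show P * C c = c • P from by
        rw [smul_eq_C_mul, mul_comm], L_smul, L_harmonic hlap hkn hhom, mul_zero]
    · obtain ⟨i, hi⟩ : ∃ i, d i ≠ 0 := by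
        by_contra hno; push_neg at hno
        have : d = 0 := Finsupp.ext fun j => hno j
        rw [this, map_zero] at hdeg; omega
      set d' := d - Finsupp.single i 1 with hd'
      have hdeg' : d'.degree = k - 1 := by rw [hd', degree_tsub_single hi, hdeg]
      have hsplit : monomial d c = X i * monomial d' c := by
        rw [show (X i : MvPolynomial (Fin 3) ℝ) = monomial (Finsupp.single i 1) 1 by
          rw [← X_pow_eq_monomial, pow_one], monomial_mul, one_mul, hd', single_add_tsub hi]
      rw [hsplit, show P * (X i * monomial d' c) = X i * (P * monomial d' c) from by ring]
      have hkey := L_pderiv i (P * monomial d' c)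
      rw [pderiv_mul, L_add] at hkey
      have t1 : L (pderiv i P * monomial d' c) = 0 := by
        refine IH (k-1) (by omega) (n-1) (by omega) _ ?_ (pderiv_isHomogeneous hhom i)
          _ _ hdeg'
        rw [lap_pderiv, hlap, map_zero]
      have t2 : L (P * pderiv i (monomial d' c)) = 0 := by
        rw [pderiv_monomial]
        rcases Nat.eq_zero_or_pos (d' i) with h0 | h0
        · rw [h0]; simp
        · refine IH (k-2) (by omega) n (by omega) P hlap hhom _ _ ?_
          rw [degree_tsub_single (by omega), hdeg']
          omega
      linarith

lemma ortho' {k n : ℕ} (hkn : k < n) {P q : MvPolynomial (Fin 3) ℝ} (hlap : lap P = 0)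
    (hhom : P.IsHomogeneous n) (hq : q.IsHomogeneous k) : L (P * q) = 0 := by
  conv_lhs => rw [q.as_sum, Finset.mul_sum, L_finset_sum]
  refine Finset.sum_eq_zero fun d hd => ?_
  refine ortho k n hkn P hlap hhom d _ ?_
  by_contra hne
  exact MvPolynomial.mem_support_iff.mp hd (hq.coeff_eq_zero hne)

lemma exp_split (x : Fin 3 → ℝ) :
    Real.exp (-∑ i, x i ^ 2) = ∏ i : Fin 3, Real.exp (-x i ^ 2) := by
  rw [← Real.exp_sum]
  congr 1
  rw [← Finset.sum_neg_distrib]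

lemma integrand_monomial (d : Fin 3 →₀ ℕ) (c : ℝ) :
    (fun x : Fin 3 → ℝ => eval x (monomial d c) * Real.exp (-∑ i, x i ^ 2))
      = fun x : Fin 3 → ℝ => c * ∏ i : Fin 3, (x i ^ d i * Real.exp (-x i ^ 2)) := by
  funext x
  rw [eval_monomial, exp_split, Finset.prod_mul_distrib, mul_assoc]
  congr 2
  rw [Finsupp.prod_fintype]
  intro i
  exact pow_zero _

lemma integrable_eval (f : MvPolynomial (Fin 3) ℝ) :
    Integrable (fun x : Fin 3 → ℝ => eval x f * Real.exp (-∑ i, x i ^ 2)) := by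
  induction f using MvPolynomial.induction_on' with
  | monomial d c =>
      rw [integrand_monomial]
      exact (Integrable.fintype_prod fun i => integrable_pow_gauss (d i)).const_mul c
  | add p q hp hq =>
      refine (hp.add hq).congr (Filter.Eventually.of_forall fun x => ?_)
      simp [eval_add, add_mul]

lemma integral_eval (f : MvPolynomial (Fin 3) ℝ) :
    ∫ x : Fin 3 → ℝ, eval x f * Real.exp (-∑ i, x i ^ 2) = L f * (√π) ^ 3 := by
  induction f using MvPolynomial.induction_on' with
  | monomial d c =>
      rw [integrand_monomial, integral_const_mul,
        integral_fintype_prod_volume_eq_prod (f := fun (i : Fin 3) (t : ℝ) => t ^ d i * Real.exp (-t ^ 2)),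
        Finset.prod_congr rfl (fun i _ => integral_pow_gauss (d i)),
        Finset.prod_mul_distrib, Finset.prod_const, L_monomial, Mo]
      simp only [Finset.card_univ, Fintype.card_fin]
      ring
  | add p q hp hq =>
      have h1 : ∀ x : Fin 3 → ℝ, eval x (p + q) * Real.exp (-∑ i, x i ^ 2)
          = eval x p * Real.exp (-∑ i, x i ^ 2) + eval x q * Real.exp (-∑ i, x i ^ 2) := by
        intro x; rw [eval_add]; ring
      simp only [h1]
      rw [integral_add (integrable_eval p) (integrable_eval q), hp, hq, L_add]
      ring

lemma volume_zero_singleton : (volume ({0} : Set (Fin 3 → ℝ))) = 0 := by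
  have : ({0} : Set (Fin 3 → ℝ)) = Set.pi Set.univ (fun _ => ({0} : Set ℝ)) := by
    ext y
    simp [funext_iff]
  rw [this, volume_pi_pi]
  simp

lemma L_pos {Q : MvPolynomial (Fin 3) ℝ} (hQ : Q ≠ 0) :
    0 < L ((X 0 ^ 4 + X 1 ^ 4 + X 2 ^ 4) * (Q * Q)) := by
  set f : MvPolynomial (Fin 3) ℝ := (X 0 ^ 4 + X 1 ^ 4 + X 2 ^ 4) * (Q * Q) with hf
  set F : (Fin 3 → ℝ) → ℝ := fun x => eval x f * Real.exp (-∑ i, x i ^ 2) with hF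
  have hevalf : ∀ x : Fin 3 → ℝ,
      eval x f = ((x 0) ^ 4 + (x 1) ^ 4 + (x 2) ^ 4) * (eval x Q * eval x Q) := by
    intro x; simp [hf]
  have hnonneg : ∀ x, 0 ≤ F x := by
    intro x
    show 0 ≤ eval x f * Real.exp (-∑ i, x i ^ 2)
    apply mul_nonneg _ (Real.exp_pos _).le
    rw [hevalf]
    exact mul_nonneg (by positivity) (mul_self_nonneg _)
  set U : Set (Fin 3 → ℝ) := {x | eval x Q ≠ 0} with hU
  have hUopen : IsOpen U := by
    have : U = (fun x : Fin 3 → ℝ => eval x Q) ⁻¹' ({(0:ℝ)}ᶜ) := rfl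
    rw [this]
    exact IsOpen.preimage (MvPolynomial.continuous_eval Q) isOpen_compl_singleton
  have hUne : U.Nonempty := by
    by_contra h
    rw [Set.not_nonempty_iff_eq_empty] at h
    apply hQ
    apply MvPolynomial.funext
    intro x
    have : x ∉ U := by rw [h]; exact Set.notMem_empty x
    simpa [hU] using this
  have hUpos : 0 < volume U := hUopen.measure_pos volume hUne
  have hsub : U \ {0} ⊆ Function.support F := by
    intro x hx
    obtain ⟨hxU, hx0⟩ := hx
    have hx0' : x ≠ 0 := by simpa using hx0
    have hS : 0 < (x 0) ^ 4 + (x 1) ^ 4 + (x 2) ^ 4 := by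
      have h0 : (0:ℝ) ≤ (x 0) ^ 4 := by positivity
      have h1 : (0:ℝ) ≤ (x 1) ^ 4 := by positivity
      have h2 : (0:ℝ) ≤ (x 2) ^ 4 := by positivity
      have hcase : x 0 ≠ 0 ∨ x 1 ≠ 0 ∨ x 2 ≠ 0 := by
        by_contra hc
        push_neg at hc
        exact hx0' (funext fun j => by fin_cases j <;> simp [hc.1, hc.2.1, hc.2.2])
      have key : 0 < (x 0)^4 ∨ 0 < (x 1)^4 ∨ 0 < (x 2)^4 := by
        rcases hcase with h | h | h
        exacts [Or.inl (lt_of_le_of_ne h0 (Ne.symm (pow_ne_zero 4 h))),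
          Or.inr (Or.inl (lt_of_le_of_ne h1 (Ne.symm (pow_ne_zero 4 h)))),
          Or.inr (Or.inr (lt_of_le_of_ne h2 (Ne.symm (pow_ne_zero 4 h))))]
      rcases key with h | h | h <;> linarith
    have hFx : 0 < F x := by
      have hq : 0 < eval x Q * eval x Q := mul_self_pos.mpr hxU
      show 0 < eval x f * Real.exp (-∑ i, x i ^ 2)
      rw [hevalf]
      exact mul_pos (mul_pos hS hq) (Real.exp_pos _)
    exact ne_of_gt hFx
  have hsupp : 0 < volume (Function.support F) := by
    calc 0 < volume U := hUpos
    _ = volume (U \ {0}) := (measure_diff_null volume_zero_singleton).symm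
    _ ≤ volume (Function.support F) := measure_mono hsub
  have hpos : 0 < ∫ x : Fin 3 → ℝ, F x :=
    (integral_pos_iff_support_of_nonneg (Pi.le_def.mpr hnonneg)
      (integrable_eval f)).mpr hsupp
  have hrep : ∫ x : Fin 3 → ℝ, F x = L f * (√π) ^ 3 := integral_eval f
  have h3 : (0:ℝ) < (√π) ^ 3 := pow_pos (Real.sqrt_pos.mpr Real.pi_pos) 3
  nlinarith [hpos, hrep, h3]

lemma lap_isHomogeneous {m : ℕ} {f : MvPolynomial (Fin 3) ℝ} (h : f.IsHomogeneous m) :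
    (lap f).IsHomogeneous (m - 2) := by
  apply IsHomogeneous.sum
  intro i _
  have := pderiv_isHomogeneous (pderiv_isHomogeneous h i) i
  rwa [Nat.sub_sub] at this

end BCaux


/-- **Consequence of the Brelot–Choquet theorem** (answer to Problem 3.25): there is no
nonzero harmonic polynomial in three real variables divisible by `x₁⁴ + x₂⁴ + x₃⁴`. -/
theorem no_harmonic_polynomial_divisible_by_quartic
    (P : MvPolynomial (Fin 3) ℝ)
    (hharm : ∑ i : Fin 3, pderiv i (pderiv i P) = 0)
    (hdvd : (X 0 ^ 4 + X 1 ^ 4 + X 2 ^ 4 : MvPolynomial (Fin 3) ℝ) ∣ P) :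
    P = 0 := by
  obtain ⟨Q, rfl⟩ := hdvd
  rcases eq_or_ne Q 0 with rfl | hQ
  · simp
  exfalso
  have hharm' : BCaux.lap ((X 0 ^ 4 + X 1 ^ 4 + X 2 ^ 4) * Q) = 0 := hharm
  set S : MvPolynomial (Fin 3) ℝ := X 0 ^ 4 + X 1 ^ 4 + X 2 ^ 4 with hS
  have hShom : S.IsHomogeneous 4 := by
    rw [hS]
    exact ((isHomogeneous_X_pow _ _).add (isHomogeneous_X_pow _ _)).add
      (isHomogeneous_X_pow _ _)
  set k := Q.totalDegree with hk
  set Q' := homogeneousComponent k Q with hQ'def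
  have hQ'hom : Q'.IsHomogeneous k := homogeneousComponent_isHomogeneous k Q
  have hQ'ne : Q' ≠ 0 := by
    obtain ⟨d, hd, hdeq⟩ := Q.support.exists_mem_eq_sup
      (MvPolynomial.support_nonempty.mpr hQ) (fun s => s.sum fun _ e => e)
    have hdeg : d.degree = k := by
      rw [hk, MvPolynomial.totalDegree, hdeq]
      rfl
    intro h0
    have hco := coeff_homogeneousComponent (σ := Fin 3) (R := ℝ) k Q d
    rw [← hQ'def, h0, coeff_zero, if_pos hdeg] at hco
    exact MvPolynomial.mem_support_iff.mp hd hco.symm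
  have hhom' : (S * Q').IsHomogeneous (4 + k) := hShom.mul hQ'hom
  have hlap' : BCaux.lap (S * Q') = 0 := by
    have hzero : (0 : MvPolynomial (Fin 3) ℝ)
        = ∑ j ∈ Finset.range (k+1), BCaux.lap (S * homogeneousComponent j Q) := by
      rw [← BCaux.lap_finset_sum, ← Finset.mul_sum, sum_homogeneousComponent]
      exact hharm'.symm
    have heach : ∀ j, (BCaux.lap (S * homogeneousComponent j Q))
        ∈ homogeneousSubmodule (Fin 3) ℝ (j+2) := by
      intro j
      rw [mem_homogeneousSubmodule]
      have h1 : (S * homogeneousComponent j Q).IsHomogeneous (4+j) :=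
        hShom.mul (homogeneousComponent_isHomogeneous j Q)
      have h2 := BCaux.lap_isHomogeneous h1
      rwa [show 4 + j - 2 = j + 2 by omega] at h2
    have hcomp := congrArg (homogeneousComponent (k+2)) hzero
    rw [map_zero, map_sum] at hcomp
    rw [Finset.sum_congr rfl (fun j _ => homogeneousComponent_of_mem (heach j))] at hcomp
    rw [Finset.sum_congr rfl
      (fun j _ => if_congr (show (k+2 = j+2) ↔ (j = k) by omega) rfl rfl)] at hcomp
    rw [Finset.sum_ite_eq' (Finset.range (k+1)) k, if_pos (Finset.self_mem_range_succ k)]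
      at hcomp
    exact hcomp.symm
  have h0 : BCaux.L (S * (Q' * Q')) = 0 := by
    have h1 := BCaux.ortho' (show k < 4 + k by omega) hlap' hhom' hQ'hom
    rw [← mul_assoc]
    exact h1
  exact absurd h0 (ne_of_gt (BCaux.L_pos hQ'ne))
end

section
/- (Becker's univalence criterion, as stated in Update 6.15.) Let f be analytic on the open unit disc 𝔻 with f'(z) ≠ 0 for all z ∈ 𝔻, and suppose that (1 − |z|²)·|f''(z)| ≤ |f'(z)| for every z ∈ 𝔻, i.e. |f''(z)/f'(z)| ≤ 1/(1 − |z|²). Then f is univalent (injective) on 𝔻. -/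
open Metric Set Filter


lemma one_add_ne_zero {w : ℂ} (hw : ‖w‖ < 1) : (1 : ℂ) + w ≠ 0 := by
  intro h
  have : w = -1 := by linear_combination h
  rw [this] at hw
  simp at hw

lemma re_moebius_nonneg {w : ℂ} (hw : ‖w‖ < 1) : 0 ≤ ((1 - w) / (1 + w)).re := by
  have h2 : w.re ^ 2 + w.im ^ 2 < 1 := by
    have h1 : ‖w‖ < 1 := hw
    have := Complex.sq_norm w
    have h3 : ‖w‖ ^ 2 < 1 := by nlinarith [norm_nonneg w]
    rw [Complex.sq_norm, Complex.normSq_apply] at h3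
    nlinarith
  rw [Complex.div_re]
  have h3 : 0 ≤ Complex.normSq (1 + w) := Complex.normSq_nonneg _
  have h4 : (1 - w).re * (1 + w).re + (1 - w).im * (1 + w).im = 1 - (w.re ^ 2 + w.im ^ 2) := by
    simp [Complex.add_re, Complex.add_im, Complex.sub_re, Complex.sub_im]
    ring
  have := div_nonneg (by nlinarith : (0:ℝ) ≤ (1 - w).re * (1 + w).re + (1 - w).im * (1 + w).im) h3
  rw [add_div] at this
  exact this

theorem pl_exists_mem {E : Type*} [NormedAddCommGroup E] [NormedSpace ℝ E] [CompleteSpace E]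
    {v : ℝ → E → E} {tMin tMax : ℝ} {t₀ : Set.Icc tMin tMax} (x₀ : E) {a L K : NNReal}
    (hpl : IsPicardLindelof v t₀ x₀ a 0 L K) :
    ∃ f : ℝ → E, f t₀ = x₀ ∧ ∀ t ∈ Set.Icc tMin tMax,
      f t ∈ closedBall x₀ a ∧ HasDerivWithinAt f (v t (f t)) (Set.Icc tMin tMax) t := by
  have hx : x₀ ∈ closedBall x₀ ((0:NNReal):ℝ) := mem_closedBall_self le_rfl
  obtain ⟨α, hα⟩ := ODE.FunSpace.exists_isFixedPt_next hpl hx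
  refine ⟨α.compProj, by rw [ODE.FunSpace.compProj_val, ← hα, ODE.FunSpace.next_apply₀],
    fun t ht ↦ ⟨α.compProj_mem_closedBall hpl.mul_max_le, ?_⟩⟩
  apply ODE.hasDerivWithinAt_picard_Icc t₀.2 hpl.continuousOn_uncurry
    α.continuous_compProj.continuousOn (fun _ ht' ↦ α.compProj_mem_closedBall hpl.mul_max_le)
    x₀ ht |>.congr_of_mem _ ht
  intro t' ht'
  nth_rw 1 [← hα]
  rw [ODE.FunSpace.compProj_of_mem ht', ODE.FunSpace.next_apply]

lemma hasDerivAt_normSq {z : ℝ → ℂ} {t : ℝ} {z' : ℂ} (h : HasDerivAt z z' t) :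
    HasDerivAt (fun τ => Complex.normSq (z τ))
      (2 * ((z t).re * z'.re + (z t).im * z'.im)) t := by
  have hre : HasDerivAt (fun τ => (z τ).re) z'.re t := by
    exact (Complex.reCLM.hasFDerivAt (x := z t)).comp_hasDerivAt t h
  have him : HasDerivAt (fun τ => (z τ).im) z'.im t := by
    exact (Complex.imCLM.hasFDerivAt (x := z t)).comp_hasDerivAt t h
  have h2 := (hre.mul hre).add (him.mul him)
  simp only [Complex.normSq_apply]
  exact h2.congr_deriv (by ring)

set_option maxHeartbeats 4000000 in
/-- **Becker's univalence criterion** (as stated in Update 6.15): if `f` is analytic on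
the unit disc, `f' ≠ 0` there, and `(1 - |z|²)|f''(z)| ≤ |f'(z)|` for all `z` in the disc,
then `f` is univalent on the disc. -/
theorem becker_univalence_criterion
    (f : ℂ → ℂ)
    (hf : DifferentiableOn ℂ f (ball (0 : ℂ) 1))
    (hf' : ∀ z ∈ ball (0 : ℂ) 1, deriv f z ≠ 0)
    (hbecker : ∀ z ∈ ball (0 : ℂ) 1,
      (1 - ‖z‖ ^ 2) * ‖deriv (deriv f) z‖ ≤
        ‖deriv f z‖) :
    Set.InjOn f (ball (0 : ℂ) 1) := by
  intro a ha b hb hab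
  by_contra hne
  have hA : AnalyticOnNhd ℂ f (ball (0:ℂ) 1) := hf.analyticOnNhd isOpen_ball
  have hA1 : AnalyticOnNhd ℂ (deriv f) (ball (0:ℂ) 1) := hA.deriv
  have hA2 : AnalyticOnNhd ℂ (deriv (deriv f)) (ball (0:ℂ) 1) := hA1.deriv
  set g : ℂ → ℂ := fun z => deriv (deriv f) z / deriv f z with hgdef
  have hg_an : AnalyticOnNhd ℂ g (ball (0:ℂ) 1) := hA2.div hA1 hf'
  have hg_bd : ∀ u ∈ ball (0:ℂ) 1, (1 - ‖u‖^2) * ‖g u‖ ≤ 1 := by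
    intro u hu
    have h1 := hbecker u hu
    have h2 : 0 < ‖deriv f u‖ := by
      simpa using hf' u hu
    have h3 : ‖g u‖ = ‖deriv (deriv f) u‖ / ‖deriv f u‖ := by
      simp [hgdef]
    have h4 : (0:ℝ) ≤ 1 - ‖u‖^2 := by
      have := mem_ball_zero_iff.1 hu
      nlinarith [norm_nonneg u]
    rw [h3, ← mul_div_assoc, div_le_one h2]
    exact h1
  -- radii
  set ρ : ℝ := max ‖a‖ ‖b‖ with hρdef
  have hρ0 : 0 ≤ ρ := le_trans (norm_nonneg a) (le_max_left _ _)
  have hρ1 : ρ < 1 := by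
    rw [hρdef, max_lt_iff]
    exact ⟨mem_ball_zero_iff.1 ha, mem_ball_zero_iff.1 hb⟩
  set R : ℝ := (1 + ρ)/2 with hRdef
  have hρR : ρ < R := by rw [hRdef]; linarith
  have hR1 : R < 1 := by rw [hRdef]; linarith
  have hR0 : 0 < R := by rw [hRdef]; linarith
  have hsub : closedBall (0:ℂ) R ⊆ ball (0:ℂ) 1 := closedBall_subset_ball hR1
  -- exponential shorthands
  set mC : ℝ → ℂ := fun t => ((Real.exp (-t) : ℝ) : ℂ) with hmCdef
  set sC : ℝ → ℂ := fun t => ((Real.exp t : ℝ) : ℂ) with hsCdef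
  set nC : ℝ → ℂ := fun t => ((Real.exp (-(max t 0)) : ℝ) : ℂ) with hnCdef
  have hnC_eq : ∀ t : ℝ, 0 ≤ t → nC t = mC t := by
    intro t ht; simp [hnCdef, hmCdef, max_eq_left ht]
  have hnC_norm : ∀ t, ‖nC t‖ = Real.exp (-(max t 0)) := by
    intro t
    rw [hnCdef]
    simp only [Complex.norm_real]
    exact abs_of_pos (Real.exp_pos _)
  have hnC_le1 : ∀ t, ‖nC t‖ ≤ 1 := by
    intro t; rw [hnC_norm]
    exact Real.exp_le_one_iff.2 (by simp [le_max_right])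
  -- the Loewner vector field
  set w : ℝ → ℂ → ℂ := fun t z => (1 - (nC t)^2) * ((nC t) * z) * g ((nC t) * z) with hwdef
  set V : ℝ → ℂ → ℂ := fun t z => -z * ((1 - w t z) / (1 + w t z)) with hVdef
  have hu_mem : ∀ (t:ℝ) (z:ℂ), ‖z‖ ≤ R → nC t * z ∈ ball (0:ℂ) 1 := by
    intro t z hz
    rw [mem_ball_zero_iff, norm_mul]
    calc ‖nC t‖ * ‖z‖ ≤ 1 * R := by
          exact mul_le_mul (hnC_le1 t) hz (norm_nonneg z) zero_le_one
      _ < 1 := by linarith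
  have hw_le : ∀ (t:ℝ) (z:ℂ), ‖z‖ ≤ R → ‖w t z‖ ≤ ‖z‖ := by
    intro t z hz
    set u : ℂ := nC t * z with hudef
    set ε : ℝ := Real.exp (-(max t 0)) with hεdef
    have hε0 : 0 < ε := Real.exp_pos _
    have hε1 : ε ≤ 1 := Real.exp_le_one_iff.2 (by simp [le_max_right])
    have hu_norm : ‖u‖ = ε * ‖z‖ := by rw [hudef, norm_mul, hnC_norm]
    have hu1 : ‖u‖ ≤ ε := by
      rw [hu_norm]
      calc ε * ‖z‖ ≤ ε * 1 := by nlinarith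
        _ = ε := mul_one ε
    have hgu := hg_bd u (hu_mem t z hz)
    have hn2 : ‖(1:ℂ) - (nC t)^2‖ = 1 - ε^2 := by
      have : (1:ℂ) - (nC t)^2 = (((1 - ε^2 : ℝ)):ℂ) := by
        rw [hnCdef, hεdef]; push_cast; ring
      rw [this, Complex.norm_real]
      exact abs_of_nonneg (by nlinarith)
    have hwn : ‖w t z‖ = (1 - ε^2) * ‖u‖ * ‖g u‖ := by
      rw [hwdef]
      simp only [norm_mul, hn2, hudef]
    rw [hwn]
    have h1 : 1 - ε^2 ≤ 1 - ‖u‖^2 := by nlinarith [norm_nonneg u]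
    have h2 : (1 - ‖u‖^2) * ‖u‖ * ‖g u‖ ≤ ‖u‖ := by
      nlinarith [norm_nonneg u, norm_nonneg (g u), hu1]
    calc (1 - ε^2) * ‖u‖ * ‖g u‖ ≤ (1 - ‖u‖^2) * ‖u‖ * ‖g u‖ := by
          nlinarith [h1, mul_nonneg (norm_nonneg u) (norm_nonneg (g u))]
      _ ≤ ‖u‖ := h2
      _ ≤ ‖z‖ := by rw [hu_norm]; nlinarith [norm_nonneg z]
  have hw_lt : ∀ (t:ℝ) (z:ℂ), ‖z‖ ≤ R → ‖w t z‖ < 1 :=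
    fun t z hz => lt_of_le_of_lt ((hw_le t z hz).trans hz) hR1
  -- pointwise derivative facts
  have hfd : ∀ u ∈ ball (0:ℂ) 1, HasDerivAt f (deriv f u) u := fun u hu =>
    (hf.differentiableAt (isOpen_ball.mem_nhds hu)).hasDerivAt
  have hfd1 : ∀ u ∈ ball (0:ℂ) 1, HasDerivAt (deriv f) (deriv (deriv f) u) u := fun u hu =>
    ((hA1 u hu).differentiableAt).hasDerivAt
  -- bounds on g
  set Bg : ℝ := 1/(1-R^2) with hBgdef
  have hBg : ∀ u : ℂ, ‖u‖ ≤ R → ‖g u‖ ≤ Bg := by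
    intro u hu
    have h1 := hg_bd u (by rw [mem_ball_zero_iff]; linarith)
    have h2 : (0:ℝ) < 1 - R^2 := by nlinarith
    have h3 : 1 - R^2 ≤ 1 - ‖u‖^2 := by nlinarith [norm_nonneg u]
    rw [hBgdef, le_div_iff₀ h2]
    nlinarith [norm_nonneg (g u)]
  have hBg0 : 0 ≤ Bg := le_trans (norm_nonneg _) (hBg 0 (by simp [hR0.le]))
  obtain ⟨Lg, hLg⟩ : ∃ L : ℝ, ∀ u ∈ closedBall (0:ℂ) R, ‖deriv g u‖ ≤ L :=
    (isCompact_closedBall (0:ℂ) R).exists_bound_of_continuousOn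
      ((hg_an.deriv.continuousOn).mono hsub)
  have hLg0 : 0 ≤ Lg := le_trans (norm_nonneg _) (hLg 0 (mem_closedBall_self hR0.le))
  have hg_lip : ∀ u ∈ closedBall (0:ℂ) R, ∀ v ∈ closedBall (0:ℂ) R,
      ‖g u - g v‖ ≤ Lg * ‖u - v‖ :=
    fun u hu v hv => (convex_closedBall (0:ℂ) R).norm_image_sub_le_of_norm_deriv_le
      (fun x hx => (hg_an x (hsub hx)).differentiableAt) hLg hv hu
  -- Lipschitz constants
  set Kw : ℝ := Bg + R*Lg with hKwdef
  have hKw0 : 0 ≤ Kw := by rw [hKwdef]; positivity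
  have hw_lip : ∀ (t:ℝ), ∀ z z' : ℂ, ‖z‖ ≤ R → ‖z'‖ ≤ R →
      ‖w t z - w t z'‖ ≤ Kw * ‖z - z'‖ := by
    intro t z z' hz hz'
    set u : ℂ := nC t * z with hudef
    set u' : ℂ := nC t * z' with hu'def
    have hun : ‖u‖ ≤ R := by
      rw [hudef, norm_mul]
      calc ‖nC t‖ * ‖z‖ ≤ 1 * R := mul_le_mul (hnC_le1 t) hz (norm_nonneg z) zero_le_one
        _ = R := one_mul R
    have hun' : ‖u'‖ ≤ R := by
      rw [hu'def, norm_mul]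
      calc ‖nC t‖ * ‖z'‖ ≤ 1 * R := mul_le_mul (hnC_le1 t) hz' (norm_nonneg z') zero_le_one
        _ = R := one_mul R
    have huu' : ‖u - u'‖ ≤ ‖z - z'‖ := by
      have : u - u' = nC t * (z - z') := by rw [hudef, hu'def]; ring
      rw [this, norm_mul]
      calc ‖nC t‖ * ‖z - z'‖ ≤ 1 * ‖z - z'‖ :=
            mul_le_mul_of_nonneg_right (hnC_le1 t) (norm_nonneg _)
        _ = ‖z - z'‖ := one_mul _
    have hn2 : ‖(1:ℂ) - (nC t)^2‖ ≤ 1 := by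
      set ε : ℝ := Real.exp (-(max t 0)) with hεdef
      have hε0 : 0 < ε := Real.exp_pos _
      have hε1 : ε ≤ 1 := Real.exp_le_one_iff.2 (by simp [le_max_right])
      have h5 : (1:ℂ) - (nC t)^2 = (((1 - ε^2 : ℝ)):ℂ) := by
        rw [hnCdef, hεdef]; push_cast; ring
      have h6 : |1 - ε^2| = 1 - ε^2 := abs_of_nonneg (by nlinarith)
      rw [h5, Complex.norm_real, Real.norm_eq_abs, h6]
      nlinarith
    have hsplit : w t z - w t z' = (1 - (nC t)^2) * ((u - u') * g u + u' * (g u - g u')) := by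
      rw [hwdef, hudef, hu'def]; ring
    rw [hsplit, norm_mul]
    have hinner : ‖(u - u') * g u + u' * (g u - g u')‖ ≤ Kw * ‖z - z'‖ := by
      calc ‖(u - u') * g u + u' * (g u - g u')‖
          ≤ ‖(u - u') * g u‖ + ‖u' * (g u - g u')‖ := norm_add_le _ _
        _ = ‖u - u'‖ * ‖g u‖ + ‖u'‖ * ‖g u - g u'‖ := by rw [norm_mul, norm_mul]
        _ ≤ ‖z - z'‖ * Bg + R * (Lg * ‖u - u'‖) := by
            have e1 := hBg u hun
            have e2 := hg_lip u (mem_closedBall_zero_iff.2 hun) u' (mem_closedBall_zero_iff.2 hun')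
            have e3 : ‖u - u'‖ * ‖g u‖ ≤ ‖z - z'‖ * Bg := by
              apply mul_le_mul huu' e1 (norm_nonneg _) (norm_nonneg _)
            have e4 : ‖u'‖ * ‖g u - g u'‖ ≤ R * (Lg * ‖u - u'‖) := by
              apply mul_le_mul hun' e2 (norm_nonneg _) (le_trans (norm_nonneg u') hun')
            linarith
        _ ≤ Kw * ‖z - z'‖ := by
            rw [hKwdef]
            have : Lg * ‖u - u'‖ ≤ Lg * ‖z - z'‖ := mul_le_mul_of_nonneg_left huu' hLg0
            nlinarith [norm_nonneg (z - z'), mul_le_mul_of_nonneg_left this hR0.le]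
    calc ‖(1:ℂ) - (nC t)^2‖ * ‖(u - u') * g u + u' * (g u - g u')‖
        ≤ 1 * (Kw * ‖z - z'‖) := by
          apply mul_le_mul hn2 hinner (norm_nonneg _) zero_le_one
      _ = Kw * ‖z - z'‖ := one_mul _
  -- denominator bound
  have hden : ∀ (t:ℝ) (z:ℂ), ‖z‖ ≤ R → 1 - R ≤ ‖1 + w t z‖ := by
    intro t z hz
    have h1 : ‖(1:ℂ)‖ ≤ ‖1 + w t z‖ + ‖w t z‖ := by
      calc ‖(1:ℂ)‖ = ‖(1 + w t z) - w t z‖ := by ring_nf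
        _ ≤ ‖1 + w t z‖ + ‖w t z‖ := norm_sub_le _ _
    have h2 := (hw_le t z hz).trans hz
    simp only [norm_one] at h1
    linarith
  set Mp : ℝ := (1+R)/(1-R) with hMpdef
  have hMp0 : 0 < Mp := div_pos (by linarith) (by linarith)
  have hp_bd : ∀ (t:ℝ) (z:ℂ), ‖z‖ ≤ R → ‖(1 - w t z)/(1 + w t z)‖ ≤ Mp := by
    intro t z hz
    rw [norm_div, hMpdef]
    apply div_le_div₀ (by linarith) _ (by linarith) (hden t z hz)
    calc ‖(1:ℂ) - w t z‖ ≤ ‖(1:ℂ)‖ + ‖w t z‖ := norm_sub_le _ _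
      _ ≤ 1 + R := by
          have := (hw_le t z hz).trans hz
          simp only [norm_one]; linarith
  set Cb : ℝ := R * Mp with hCbdef
  have hCb0 : 0 < Cb := mul_pos hR0 hMp0
  have hV_bd : ∀ (t:ℝ) (z:ℂ), ‖z‖ ≤ R → ‖V t z‖ ≤ Cb := by
    intro t z hz
    rw [hVdef]
    simp only [norm_mul, norm_neg]
    rw [hCbdef]
    exact mul_le_mul hz (hp_bd t z hz) (norm_nonneg _) hR0.le
  set Kp : ℝ := 2*Kw/(1-R)^2 with hKpdef
  have hKp0 : 0 ≤ Kp := by rw [hKpdef]; positivity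
  have hp_lip : ∀ (t:ℝ), ∀ z z' : ℂ, ‖z‖ ≤ R → ‖z'‖ ≤ R →
      ‖(1 - w t z)/(1 + w t z) - (1 - w t z')/(1 + w t z')‖ ≤ Kp * ‖z - z'‖ := by
    intro t z z' hz hz'
    have hne1 : (1:ℂ) + w t z ≠ 0 := one_add_ne_zero (hw_lt t z hz)
    have hne2 : (1:ℂ) + w t z' ≠ 0 := one_add_ne_zero (hw_lt t z' hz')
    have hid : (1 - w t z)/(1 + w t z) - (1 - w t z')/(1 + w t z')
        = 2*(w t z' - w t z)/((1 + w t z)*(1 + w t z')) := by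
      field_simp
      ring
    rw [hid, norm_div, norm_mul (1 + w t z) (1 + w t z')]
    have h1 : ‖2*(w t z' - w t z)‖ ≤ 2 * (Kw * ‖z - z'‖) := by
      rw [norm_mul]
      have : ‖w t z' - w t z‖ ≤ Kw * ‖z - z'‖ := by
        rw [norm_sub_rev]
        exact hw_lip t z z' hz hz'
      simpa using mul_le_mul_of_nonneg_left this (by norm_num : (0:ℝ) ≤ 2)
    have h2 : (1-R)*(1-R) ≤ ‖1 + w t z‖ * ‖1 + w t z'‖ :=
      mul_le_mul (hden t z hz) (hden t z' hz') (by linarith) (norm_nonneg _)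
    calc ‖2*(w t z' - w t z)‖ / (‖1 + w t z‖ * ‖1 + w t z'‖)
        ≤ (2 * (Kw * ‖z - z'‖)) / ((1-R)*(1-R)) := by
          apply div_le_div₀ (by positivity) h1 (by nlinarith) h2
      _ = Kp * ‖z - z'‖ := by rw [hKpdef]; field_simp
  set Kc : ℝ := Mp + R*Kp with hKcdef
  have hV_lip : ∀ (t:ℝ), ∀ z z' : ℂ, ‖z‖ ≤ R → ‖z'‖ ≤ R →
      ‖V t z - V t z'‖ ≤ Kc * ‖z - z'‖ := by
    intro t z z' hz hz'
    have hid : V t z - V t z' = -((z - z') * ((1 - w t z)/(1 + w t z)))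
        - z' * ((1 - w t z)/(1 + w t z) - (1 - w t z')/(1 + w t z')) := by
      rw [hVdef]; ring
    rw [hid, hKcdef]
    have htri : ‖-((z - z') * ((1 - w t z)/(1 + w t z)))
        - z' * ((1 - w t z)/(1 + w t z) - (1 - w t z')/(1 + w t z'))‖
        ≤ ‖(z - z') * ((1 - w t z)/(1 + w t z))‖
          + ‖z' * ((1 - w t z)/(1 + w t z) - (1 - w t z')/(1 + w t z'))‖ := by
      have h0 : -((z - z') * ((1 - w t z)/(1 + w t z)))
          - z' * ((1 - w t z)/(1 + w t z) - (1 - w t z')/(1 + w t z'))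
          = -(((z - z') * ((1 - w t z)/(1 + w t z)))
            + z' * ((1 - w t z)/(1 + w t z) - (1 - w t z')/(1 + w t z'))) := by ring
      rw [h0, norm_neg]
      exact norm_add_le _ _
    have hb1 : ‖(z - z') * ((1 - w t z)/(1 + w t z))‖ ≤ Mp * ‖z - z'‖ := by
      rw [norm_mul, mul_comm]
      exact mul_le_mul_of_nonneg_right (hp_bd t z hz) (norm_nonneg _)
    have hb2 : ‖z' * ((1 - w t z)/(1 + w t z) - (1 - w t z')/(1 + w t z'))‖
        ≤ R * (Kp * ‖z - z'‖) := by
      rw [norm_mul]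
      exact mul_le_mul hz' (hp_lip t z z' hz hz') (norm_nonneg _) hR0.le
    calc ‖-((z - z') * ((1 - w t z)/(1 + w t z)))
        - z' * ((1 - w t z)/(1 + w t z) - (1 - w t z')/(1 + w t z'))‖
        ≤ Mp * ‖z - z'‖ + R * (Kp * ‖z - z'‖) := by linarith
      _ = (Mp + R*Kp) * ‖z - z'‖ := by ring
  -- continuity of the vector field in time
  have hnCc : Continuous nC := by
    rw [hnCdef]
    exact Complex.continuous_ofReal.comp
      (Real.continuous_exp.comp ((continuous_id.max continuous_const).neg))
  have hVcont : ∀ z : ℂ, ‖z‖ ≤ R → Continuous (fun t => V t z) := by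
    intro z hz
    have hgc : Continuous (fun t => g (nC t * z)) :=
      (hg_an.continuousOn).comp_continuous (hnCc.mul continuous_const)
        (fun t => hu_mem t z hz)
    have hwc : Continuous (fun t => w t z) := by
      simp only [hwdef]
      exact ((continuous_const.sub (hnCc.pow 2)).mul (hnCc.mul continuous_const)).mul hgc
    simp only [hVdef]
    exact continuous_const.mul ((continuous_const.sub hwc).div (continuous_const.add hwc)
      (fun t => one_add_ne_zero (hw_lt t z hz)))
  set K' : NNReal := Real.toNNReal Kc with hKpdef2
  have hVlip' : ∀ t : ℝ, LipschitzOnWith K' (V t) (closedBall (0:ℂ) R) := by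
    intro t
    apply LipschitzOnWith.of_dist_le_mul
    intro x hx y hy
    rw [dist_eq_norm, dist_eq_norm]
    calc ‖V t x - V t y‖ ≤ Kc * ‖x - y‖ :=
          hV_lip t x y (mem_closedBall_zero_iff.1 hx) (mem_closedBall_zero_iff.1 hy)
      _ ≤ (K' : ℝ) * ‖x - y‖ :=
          mul_le_mul_of_nonneg_right (Real.le_coe_toNNReal Kc) (norm_nonneg _)
  -- the Loewner chain map
  set F : ℝ → ℂ → ℂ :=
    fun t z => f (mC t * z) + (sC t - mC t) * z * deriv f (mC t * z) with hFdef
  set h : ℝ := (R - ρ)/Cb with hhdef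
  have hh : 0 < h := div_pos (by linarith) hCb0
  -- one step of the flow
  have step : ∀ s : ℝ, 0 ≤ s → ∀ x : ℂ, ‖x‖ ≤ ρ → ∃ zx : ℝ → ℂ,
      zx s = x ∧ ContinuousOn zx (Icc s (s+h)) ∧
      (∀ t ∈ Icc s (s+h), ‖zx t‖ ≤ ρ ∧ HasDerivWithinAt zx (V t (zx t)) (Icc s (s+h)) t) ∧
      F (s+h) (zx (s+h)) = F s x := by
    intro s hs x hx
    have hsub2 : closedBall x (R - ρ) ⊆ closedBall (0:ℂ) R := by
      intro y hy
      rw [mem_closedBall_zero_iff]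
      have h1 : ‖y - x‖ ≤ R - ρ := by rwa [mem_closedBall, dist_eq_norm] at hy
      calc ‖y‖ = ‖y - x + x‖ := by ring_nf
        _ ≤ ‖y - x‖ + ‖x‖ := norm_add_le _ _
        _ ≤ R := by linarith
    have hRρ : 0 ≤ R - ρ := by linarith
    have hsub2' : closedBall x (((R - ρ).toNNReal : NNReal) : ℝ) ⊆ closedBall (0:ℂ) R := by
      rw [Real.coe_toNNReal _ hRρ]; exact hsub2
    have hpl : IsPicardLindelof V (tmin := s) (tmax := s+h) ⟨s, le_refl s, by linarith⟩ x
        (R - ρ).toNNReal 0 Cb.toNNReal K' := by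
      refine ⟨?_, ?_, ?_, ?_⟩
      · intro t _; exact (hVlip' t).mono hsub2'
      · intro z hz; exact (hVcont z (mem_closedBall_zero_iff.1 (hsub2' hz))).continuousOn
      · intro t _ z hz; rw [Real.coe_toNNReal _ hCb0.le]
        exact hV_bd t z (mem_closedBall_zero_iff.1 (hsub2' hz))
      · simp only [Real.coe_toNNReal _ hCb0.le, Real.coe_toNNReal _ hRρ, NNReal.coe_zero, sub_zero]
        have h1 : s + h - s = h := by ring
        have h2 : s - s = 0 := by ring
        rw [h1, h2, max_eq_left hh.le, hhdef]
        rw [mul_div_cancel₀ _ hCb0.ne']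
    obtain ⟨zx, hzx0, hzx⟩ := pl_exists_mem x hpl
    have hmemR : ∀ t ∈ Icc s (s+h), ‖zx t‖ ≤ R := fun t ht =>
      mem_closedBall_zero_iff.1 (hsub2' ((hzx t ht).1))
    have hcont : ContinuousOn zx (Icc s (s+h)) :=
      fun t ht => ((hzx t ht).2).continuousWithinAt
    -- invariance of the disc of radius ρ
    have hinv : ∀ t ∈ Icc s (s+h), ‖zx t‖ ≤ ρ := by
      have hanti : AntitoneOn (fun t => Complex.normSq (zx t)) (Icc s (s+h)) := by
        apply antitoneOn_of_deriv_nonpos (convex_Icc s (s+h))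
        · exact Complex.continuous_normSq.comp_continuousOn hcont
        · intro t ht
          rw [interior_Icc] at ht
          exact (hasDerivAt_normSq (((hzx t (Ioo_subset_Icc_self ht)).2).hasDerivAt
            (Icc_mem_nhds ht.1 ht.2))).differentiableAt.differentiableWithinAt
        · intro t ht
          rw [interior_Icc] at ht
          have hD : HasDerivAt zx (V t (zx t)) t :=
            ((hzx t (Ioo_subset_Icc_self ht)).2).hasDerivAt (Icc_mem_nhds ht.1 ht.2)
          rw [(hasDerivAt_normSq hD).deriv]
          have hzR : ‖zx t‖ ≤ R := hmemR t (Ioo_subset_Icc_self ht)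
          have hre0 : 0 ≤ ((1 - w t (zx t))/(1 + w t (zx t))).re :=
            re_moebius_nonneg (hw_lt t _ hzR)
          have hidre : (zx t).re * (V t (zx t)).re + (zx t).im * (V t (zx t)).im
              = -(Complex.normSq (zx t)) * ((1 - w t (zx t))/(1 + w t (zx t))).re := by
            simp only [hVdef, Complex.mul_re, Complex.mul_im, Complex.neg_re, Complex.neg_im,
              Complex.normSq_apply]
            ring
          nlinarith only [hidre, hre0, Complex.normSq_nonneg (zx t)]
      intro t ht
      have h1 : Complex.normSq (zx t) ≤ Complex.normSq (zx s) :=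
        hanti (left_mem_Icc.2 (by linarith)) ht ht.1
      rw [hzx0] at h1
      have h2 : ‖zx t‖^2 ≤ ‖x‖^2 := by
        rw [Complex.sq_norm, Complex.sq_norm]
        exact h1
      nlinarith only [h2, hx, norm_nonneg (zx t), norm_nonneg x, hρ0]
    -- constancy of the chain
    have hconst : F (s+h) (zx (s+h)) = F s x := by
      have hmCc : Continuous mC := by
        rw [hmCdef]
        exact Complex.continuous_ofReal.comp (Real.continuous_exp.comp continuous_neg)
      have hsCc : Continuous sC := by
        rw [hsCdef]
        exact Complex.continuous_ofReal.comp Real.continuous_exp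
      have hmap : ∀ t ∈ Icc s (s+h), mC t * zx t ∈ ball (0:ℂ) 1 := by
        intro t ht
        rw [← hnC_eq t (le_trans hs ht.1)]
        exact hu_mem t (zx t) (hmemR t ht)
      have huc : ContinuousOn (fun τ => mC τ * zx τ) (Icc s (s+h)) :=
        (hmCc.continuousOn).mul hcont
      have hφcont : ContinuousOn (fun τ => F τ (zx τ)) (Icc s (s+h)) := by
        simp only [hFdef]
        exact ((hf.continuousOn).comp huc hmap).add
          ((((hsCc.sub hmCc).continuousOn).mul hcont).mul
            ((hA1.continuousOn).comp huc hmap))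
      have hφder : ∀ t ∈ Ico s (s+h),
          HasDerivWithinAt (fun τ => F τ (zx τ)) 0 (Ici t) t := by
        intro t ht
        have htIcc : t ∈ Icc s (s+h) := Ico_subset_Icc_self ht
        have h0t : 0 ≤ t := le_trans hs ht.1
        have humem : mC t * zx t ∈ ball (0:ℂ) 1 := hmap t htIcc
        have hA0 : deriv f (mC t * zx t) ≠ 0 := hf' _ humem
        have hm' : HasDerivAt mC (-(mC t)) t := by
          have h0 := ((Real.hasDerivAt_exp (-t)).comp t (hasDerivAt_neg t)).ofReal_comp
          simp only [hmCdef]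
          exact h0.congr_deriv (by push_cast; ring)
        have hs' : HasDerivAt sC (sC t) t := by
          have h0 := (Real.hasDerivAt_exp t).ofReal_comp
          simp only [hsCdef]
          exact h0
        have hz' : HasDerivWithinAt zx (V t (zx t)) (Icc s (s+h)) t := (hzx t htIcc).2
        have hu' : HasDerivWithinAt (fun τ => mC τ * zx τ)
            (-(mC t) * zx t + mC t * V t (zx t)) (Icc s (s+h)) t :=
          hm'.hasDerivWithinAt.mul hz'
        have h1 : HasDerivWithinAt (fun τ => f (mC τ * zx τ))
            (deriv f (mC t * zx t) * (-(mC t) * zx t + mC t * V t (zx t))) (Icc s (s+h)) t :=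
          (hfd _ humem).comp_hasDerivWithinAt t hu'
        have h2 : HasDerivWithinAt (fun τ => deriv f (mC τ * zx τ))
            (deriv (deriv f) (mC t * zx t) * (-(mC t) * zx t + mC t * V t (zx t)))
            (Icc s (s+h)) t :=
          (hfd1 _ humem).comp_hasDerivWithinAt (h₂ := deriv f) t hu'
        have h3 : HasDerivWithinAt (fun τ => (sC τ - mC τ) * zx τ)
            ((sC t - -(mC t)) * zx t + (sC t - mC t) * V t (zx t)) (Icc s (s+h)) t :=
          (hs'.sub hm').hasDerivWithinAt.mul hz'
        have h5 := h1.add (h3.mul h2)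
        have h5' : HasDerivWithinAt (fun τ => F τ (zx τ)) 0 (Icc s (s+h)) t := by
          simp only [hFdef]
          refine h5.congr_deriv (Eq.symm ?_)
          -- 0 = the total derivative
          have hsm : sC t * mC t = 1 := by
            rw [hsCdef, hmCdef]
            rw [← Complex.ofReal_mul, ← Real.exp_add]
            simp
          have hm0 : mC t ≠ 0 := by
            simp only [hmCdef]
            exact Complex.ofReal_ne_zero.2 (Real.exp_pos (-t)).ne'
          have h1w : (1:ℂ) + w t (zx t) ≠ 0 := one_add_ne_zero (hw_lt t _ (hmemR t htIcc))
          have hwt : w t (zx t) = (1 - (mC t)^2) * (mC t * zx t) *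
              (deriv (deriv f) (mC t * zx t) / deriv f (mC t * zx t)) := by
            simp only [hwdef, hnC_eq t h0t, hgdef]
          have hVt : V t (zx t) = -(zx t) * ((1 - w t (zx t))/(1 + w t (zx t))) := by
            simp only [hVdef]
          have hP : ((1 - w t (zx t))/(1 + w t (zx t))) * (1 + w t (zx t)) = 1 - w t (zx t) :=
            div_mul_cancel₀ _ h1w
          have hr2 : deriv f (mC t * zx t) * w t (zx t)
              = (1 - (mC t)^2) * (mC t * zx t) * deriv (deriv f) (mC t * zx t) := by
            rw [hwt]
            field_simp
          rw [hVt]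
          linear_combination (sC t * deriv f (mC t * zx t) * zx t) * hP
            + ((zx t - (-(zx t) * ((1 - w t (zx t))/(1 + w t (zx t))))) * (mC t)^2 * zx t
                * deriv (deriv f) (mC t * zx t)) * hsm
            + (((-(zx t) * ((1 - w t (zx t))/(1 + w t (zx t)))) - zx t) * sC t) * hr2
        exact h5'.mono_of_mem_nhdsWithin (Icc_mem_nhdsGE_of_mem ht)
      have hcc := constant_of_has_deriv_right_zero hφcont hφder (s+h)
        (right_mem_Icc.2 (by linarith))
      rw [← hzx0]
      exact hcc
    exact ⟨zx, hzx0, hcont, fun t ht => ⟨hinv t ht, (hzx t ht).2⟩, hconst⟩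
  -- bounds on f and f' on the rho-ball
  have hsubρ : closedBall (0:ℂ) ρ ⊆ ball (0:ℂ) 1 :=
    subset_trans (closedBall_subset_closedBall hρR.le) hsub
  obtain ⟨M₁, hM₁⟩ : ∃ M, ∀ u ∈ closedBall (0:ℂ) ρ, ‖deriv f u‖ ≤ M :=
    (isCompact_closedBall (0:ℂ) ρ).exists_bound_of_continuousOn ((hA1.continuousOn).mono hsubρ)
  obtain ⟨M₂, hM₂⟩ : ∃ M, ∀ u ∈ closedBall (0:ℂ) ρ, ‖deriv (deriv f) u‖ ≤ M :=
    (isCompact_closedBall (0:ℂ) ρ).exists_bound_of_continuousOn ((hA2.continuousOn).mono hsubρ)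
  have hM₁0 : 0 ≤ M₁ := le_trans (norm_nonneg _) (hM₁ 0 (mem_closedBall_self hρ0))
  have hM₂0 : 0 ≤ M₂ := le_trans (norm_nonneg _) (hM₂ 0 (mem_closedBall_self hρ0))
  have hf_lip : ∀ u ∈ closedBall (0:ℂ) ρ, ∀ v ∈ closedBall (0:ℂ) ρ,
      ‖f u - f v‖ ≤ M₁ * ‖u - v‖ :=
    fun u hu v hv => (convex_closedBall (0:ℂ) ρ).norm_image_sub_le_of_norm_deriv_le
      (fun x hx => hf.differentiableAt (isOpen_ball.mem_nhds (hsubρ hx))) hM₁ hv hu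
  have hf'_lip : ∀ u ∈ closedBall (0:ℂ) ρ, ∀ v ∈ closedBall (0:ℂ) ρ,
      ‖deriv f u - deriv f v‖ ≤ M₂ * ‖u - v‖ :=
    fun u hu v hv => (convex_closedBall (0:ℂ) ρ).norm_image_sub_le_of_norm_deriv_le
      (fun x hx => (hA1 x (hsubρ hx)).differentiableAt) hM₂ hv hu
  set c₀ : ℝ := ‖deriv f 0‖ with hc₀def
  have hc₀ : 0 < c₀ := by
    rw [hc₀def, norm_pos_iff]
    exact hf' 0 (mem_ball_self one_pos)
  -- induction along the chain
  have key : ∀ n : ℕ, ∃ x y : ℂ, ‖x‖ ≤ ρ ∧ ‖y‖ ≤ ρ ∧ x ≠ y ∧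
      F ((n:ℝ)*h) x = f a ∧ F ((n:ℝ)*h) y = f b := by
    intro n
    induction n with
    | zero =>
      have hF0 : ∀ z : ℂ, F (((0:ℕ):ℝ)*h) z = f z := by
        intro z
        simp only [hFdef, hmCdef, hsCdef]
        norm_num
      exact ⟨a, b, le_max_left _ _, le_max_right _ _, hne, by rw [hF0], by rw [hF0]⟩
    | succ n ih =>
      obtain ⟨x, y, hxρ, hyρ, hxy, hFx, hFy⟩ := ih
      have hs0 : 0 ≤ (n:ℝ)*h := mul_nonneg (Nat.cast_nonneg n) hh.le
      obtain ⟨zx, hzx0, hzxc, hzxp, hzxF⟩ := step ((n:ℝ)*h) hs0 x hxρ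
      obtain ⟨zy, hzy0, hzyc, hzyp, hzyF⟩ := step ((n:ℝ)*h) hs0 y hyρ
      have hrmem : (n:ℝ)*h + h ∈ Icc ((n:ℝ)*h) ((n:ℝ)*h + h) := right_mem_Icc.2 (by linarith)
      have hne2 : zx ((n:ℝ)*h + h) ≠ zy ((n:ℝ)*h + h) := by
        intro heq
        have derx : ∀ t ∈ Ioc ((n:ℝ)*h) ((n:ℝ)*h + h),
            HasDerivWithinAt zx (V t (zx t)) (Iic t) t := fun t ht =>
          ((hzxp t ⟨ht.1.le, ht.2⟩).2).mono_of_mem_nhdsWithin (Icc_mem_nhdsLE_of_mem ht)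
        have dery : ∀ t ∈ Ioc ((n:ℝ)*h) ((n:ℝ)*h + h),
            HasDerivWithinAt zy (V t (zy t)) (Iic t) t := fun t ht =>
          ((hzyp t ⟨ht.1.le, ht.2⟩).2).mono_of_mem_nhdsWithin (Icc_mem_nhdsLE_of_mem ht)
        have memx : ∀ t ∈ Ioc ((n:ℝ)*h) ((n:ℝ)*h + h), zx t ∈ closedBall (0:ℂ) R :=
          fun t ht => mem_closedBall_zero_iff.2 (((hzxp t ⟨ht.1.le, ht.2⟩).1).trans hρR.le)
        have memy : ∀ t ∈ Ioc ((n:ℝ)*h) ((n:ℝ)*h + h), zy t ∈ closedBall (0:ℂ) R :=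
          fun t ht => mem_closedBall_zero_iff.2 (((hzyp t ⟨ht.1.le, ht.2⟩).1).trans hρR.le)
        have hEq := ODE_solution_unique_of_mem_Icc_left (v := V)
          (s := fun _ => closedBall (0:ℂ) R) (fun t _ => hVlip' t)
          hzxc derx memx hzyc dery memy heq
        have hats := hEq (left_mem_Icc.2 (by linarith : (n:ℝ)*h ≤ (n:ℝ)*h + h))
        rw [hzx0, hzy0] at hats
        exact hxy hats
      have harith : (((n+1:ℕ)):ℝ)*h = (n:ℝ)*h + h := by push_cast; ring
      refine ⟨zx ((n:ℝ)*h + h), zy ((n:ℝ)*h + h),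
        (hzxp _ hrmem).1, (hzyp _ hrmem).1, hne2, ?_, ?_⟩
      · rw [harith, hzxF]; exact hFx
      · rw [harith, hzyF]; exact hFy
  -- final contradiction
  obtain ⟨N, hN⟩ := exists_nat_ge (((c₀ + 2*M₂ + M₁)/c₀) / h)
  obtain ⟨x, y, hxρ, hyρ, hxy, hFx, hFy⟩ := key N
  set T : ℝ := (N:ℝ)*h with hTdef
  have hT0 : 0 ≤ T := mul_nonneg (Nat.cast_nonneg N) hh.le
  have hT1 : (c₀ + 2*M₂ + M₁)/c₀ ≤ T := by
    rw [div_le_iff₀ hh] at hN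
    rw [hTdef]; linarith
  set er : ℝ := Real.exp (-T) with herdef
  set sr : ℝ := Real.exp T with hsrdef
  have her0 : 0 < er := Real.exp_pos _
  have her1 : er ≤ 1 := Real.exp_le_one_iff.2 (by linarith)
  have hsre : sr * er = 1 := by rw [hsrdef, herdef, ← Real.exp_add]; simp
  have hsrT : T + 1 ≤ sr := by rw [hsrdef]; linarith [Real.add_one_le_exp T]
  have hFxy : F T x = F T y := by rw [hFx, hFy, hab]
  simp only [hFdef] at hFxy
  have hmn : ‖mC T‖ = er := by
    simp only [hmCdef, herdef, Complex.norm_real]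
    exact abs_of_pos (Real.exp_pos _)
  have hxmem : mC T * x ∈ closedBall (0:ℂ) ρ := by
    rw [mem_closedBall_zero_iff, norm_mul, hmn]
    calc er * ‖x‖ ≤ 1 * ρ := mul_le_mul her1 hxρ (norm_nonneg x) zero_le_one
      _ = ρ := one_mul ρ
  have hymem : mC T * y ∈ closedBall (0:ℂ) ρ := by
    rw [mem_closedBall_zero_iff, norm_mul, hmn]
    calc er * ‖y‖ ≤ 1 * ρ := mul_le_mul her1 hyρ (norm_nonneg y) zero_le_one
      _ = ρ := one_mul ρ
  set δ : ℝ := ‖x - y‖ with hδdef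
  have hδ0 : 0 < δ := by rw [hδdef, norm_pos_iff, sub_ne_zero]; exact hxy
  have hd : ‖mC T * x - mC T * y‖ = er * δ := by
    rw [show mC T * x - mC T * y = mC T * (x - y) from by ring, norm_mul, hmn, hδdef]
  have hkey1 : (sC T - mC T) * (x * deriv f (mC T * x) - y * deriv f (mC T * y))
      = -(f (mC T * x) - f (mC T * y)) := by linear_combination hFxy
  have hub : ‖f (mC T * x) - f (mC T * y)‖ ≤ M₁ * (er * δ) := by
    calc ‖f (mC T * x) - f (mC T * y)‖ ≤ M₁ * ‖mC T * x - mC T * y‖ :=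
          hf_lip _ hxmem _ hymem
      _ = M₁ * (er * δ) := by rw [hd]
  have hlb : c₀ * δ - 2*M₂*er*δ ≤ ‖x * deriv f (mC T * x) - y * deriv f (mC T * y)‖ := by
    have h0mem : (0:ℂ) ∈ closedBall (0:ℂ) ρ := mem_closedBall_self hρ0
    have e1 : ‖deriv f (mC T * x) - deriv f 0‖ ≤ M₂ * er := by
      have e0 := hf'_lip _ hxmem _ h0mem
      have hn : ‖mC T * x - 0‖ ≤ er := by
        rw [sub_zero, norm_mul, hmn]
        calc er * ‖x‖ ≤ er * 1 :=
              mul_le_mul_of_nonneg_left (le_trans hxρ hρ1.le) her0.le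
          _ = er := mul_one er
      calc ‖deriv f (mC T * x) - deriv f 0‖ ≤ M₂ * ‖mC T * x - 0‖ := e0
        _ ≤ M₂ * er := mul_le_mul_of_nonneg_left hn hM₂0
    have e2 : ‖deriv f (mC T * x) - deriv f (mC T * y)‖ ≤ M₂ * (er * δ) := by
      calc ‖deriv f (mC T * x) - deriv f (mC T * y)‖ ≤ M₂ * ‖mC T * x - mC T * y‖ :=
            hf'_lip _ hxmem _ hymem
        _ = M₂ * (er * δ) := by rw [hd]
    have e3 : ‖deriv f 0 * (x - y)‖ = c₀ * δ := by rw [norm_mul, hc₀def, hδdef]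
    have e4 : ‖(x - y) * (deriv f (mC T * x) - deriv f 0)‖ ≤ δ * (M₂ * er) := by
      rw [norm_mul, ← hδdef]
      exact mul_le_mul_of_nonneg_left e1 (norm_nonneg _)
    have e5 : ‖y * (deriv f (mC T * x) - deriv f (mC T * y))‖ ≤ 1 * (M₂ * (er * δ)) := by
      rw [norm_mul]
      exact mul_le_mul (le_trans hyρ hρ1.le) e2 (norm_nonneg _) zero_le_one
    have hid : x * deriv f (mC T * x) - y * deriv f (mC T * y)
        = deriv f 0 * (x - y) + (x - y) * (deriv f (mC T * x) - deriv f 0)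
          + y * (deriv f (mC T * x) - deriv f (mC T * y)) := by ring
    have t1 : ‖deriv f 0 * (x - y)‖
        ≤ ‖x * deriv f (mC T * x) - y * deriv f (mC T * y)‖
          + ‖(x - y) * (deriv f (mC T * x) - deriv f 0)‖
          + ‖y * (deriv f (mC T * x) - deriv f (mC T * y))‖ := by
      rw [hid]
      set A1 := deriv f 0 * (x - y)
      set B1 := (x - y) * (deriv f (mC T * x) - deriv f 0)
      set C1 := y * (deriv f (mC T * x) - deriv f (mC T * y))
      calc ‖A1‖ = ‖(A1 + B1 + C1) - B1 - C1‖ := by rw [show A1 + B1 + C1 - B1 - C1 = A1 from by ring]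
        _ ≤ ‖(A1 + B1 + C1) - B1‖ + ‖C1‖ := norm_sub_le _ _
        _ ≤ ‖A1 + B1 + C1‖ + ‖B1‖ + ‖C1‖ := by linarith [norm_sub_le (A1 + B1 + C1) B1]
    rw [e3] at t1
    linarith only [t1, e4, e5]
  have hnsm : ‖sC T - mC T‖ = sr - er := by
    have hcast : sC T - mC T = ((sr - er : ℝ) : ℂ) := by
      simp only [hsCdef, hmCdef, hsrdef, herdef]; push_cast; ring
    rw [hcast, Complex.norm_real, Real.norm_eq_abs]
    have : er ≤ sr := by linarith
    exact abs_of_nonneg (by linarith)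
  have hmain : (sr - er) * ‖x * deriv f (mC T * x) - y * deriv f (mC T * y)‖
      ≤ M₁ * (er * δ) := by
    calc (sr - er) * ‖x * deriv f (mC T * x) - y * deriv f (mC T * y)‖
        = ‖(sC T - mC T) * (x * deriv f (mC T * x) - y * deriv f (mC T * y))‖ := by
          rw [norm_mul, hnsm]
      _ = ‖f (mC T * x) - f (mC T * y)‖ := by rw [hkey1, norm_neg]
      _ ≤ M₁ * (er * δ) := hub
  have hsr_er : 0 ≤ sr - er := by linarith
  have hfin : (sr - er) * (c₀ * δ - 2*M₂*er*δ) ≤ M₁ * (er * δ) :=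
    le_trans (mul_le_mul_of_nonneg_left hlb hsr_er) hmain
  have expand : (sr - er) * (c₀ * δ - 2*M₂*er*δ)
      = sr*c₀*δ - 2*M₂*δ - er*c₀*δ + 2*M₂*er^2*δ := by
    linear_combination (-(2*M₂*δ)) * hsre
  have final1 : sr*c₀*δ ≤ (2*M₂ + c₀ + M₁)*δ := by
    nlinarith only [hfin, expand, her0, her1, hδ0, hc₀, hM₂0, hM₁0, sq_nonneg er,
      mul_nonneg (mul_nonneg hc₀.le hδ0.le) (by linarith : (0:ℝ) ≤ 1 - er),
      mul_nonneg (mul_nonneg hM₁0 hδ0.le) (by linarith : (0:ℝ) ≤ 1 - er),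
      mul_nonneg (mul_nonneg hM₂0 (sq_nonneg er)) hδ0.le]
  have final2 : sr*c₀ ≤ 2*M₂ + c₀ + M₁ := by
    have := (mul_le_mul_iff_of_pos_right hδ0).1 final1
    linarith only [this]
  have final3 : (T+1)*c₀ ≤ sr * c₀ := mul_le_mul_of_nonneg_right hsrT hc₀.le
  have hc₀T : c₀ + 2*M₂ + M₁ ≤ c₀ * T := by
    rw [div_le_iff₀ hc₀] at hT1
    linarith
  nlinarith only [final2, final3, hc₀T, hc₀]
end

section
/- (Counterexample constructed in Update 9.3(a).) On the open unit disc 𝔻 define F₁(z) = 1 − z and F₂(z) = exp(−(1+z)/(1−z)), and set f₁ = F₁², f₂ = F₂², f = F₁·F₂. Then: (i) |f(z)| ≤ |f₁(z)| + |f₂(z)| for every z ∈ 𝔻; and (ii) there do not exist functions h₁, h₂, each analytic and bounded on 𝔻, such that f(z) = f₁(z)·h₁(z) + f₂(z)·h₂(z) for all z ∈ 𝔻. -/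
open Metric

/-- `F₁(z) = 1 - z`. -/
noncomputable def F₁ : ℂ → ℂ := fun z => 1 - z

/-- `F₂(z) = exp (-(1+z)/(1-z))`. -/
noncomputable def F₂ : ℂ → ℂ := fun z => Complex.exp (-(1 + z) / (1 - z))

/-- **Counterexample from Update 9.3(a)**: with `f₁ = F₁²`, `f₂ = F₂²`, `f = F₁ F₂` on the
unit disc, one has `|f| ≤ |f₁| + |f₂|` there, yet there are no bounded analytic `h₁, h₂`
on the disc with `f = f₁ h₁ + f₂ h₂`. -/
theorem rubel_ideal_counterexample :
    (∀ z ∈ ball (0 : ℂ) 1,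
      ‖F₁ z * F₂ z‖ ≤ ‖F₁ z ^ 2‖ + ‖F₂ z ^ 2‖) ∧
    ¬ ∃ h₁ h₂ : ℂ → ℂ,
      DifferentiableOn ℂ h₁ (ball (0 : ℂ) 1) ∧ (∃ M : ℝ, ∀ z ∈ ball (0 : ℂ) 1, ‖h₁ z‖ ≤ M) ∧
      DifferentiableOn ℂ h₂ (ball (0 : ℂ) 1) ∧ (∃ M : ℝ, ∀ z ∈ ball (0 : ℂ) 1, ‖h₂ z‖ ≤ M) ∧
      ∀ z ∈ ball (0 : ℂ) 1, F₁ z * F₂ z = F₁ z ^ 2 * h₁ z + F₂ z ^ 2 * h₂ z := by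
  constructor
  · intro z _
    rw [norm_mul, norm_pow, norm_pow]
    nlinarith [sq_nonneg (‖F₁ z‖ - ‖F₂ z‖),
      mul_nonneg (norm_nonneg (F₁ z)) (norm_nonneg (F₂ z))]
  · rintro ⟨h₁, h₂, hd₁, ⟨M₁, hM₁⟩, hd₂, ⟨M₂, hM₂⟩, heq⟩
    have hM₁0 : 0 ≤ M₁ := le_trans (norm_nonneg _) (hM₁ 0 (by simp))
    have hM₂0 : 0 ≤ M₂ := le_trans (norm_nonneg _) (hM₂ 0 (by simp))
    set φ : ℂ → ℂ := fun w => (w - 1) / (w + 1) with hφdef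
    set P : ℂ → ℂ := fun w => Complex.exp (-w) * h₂ (φ w) * (w + 1) / 2 with hPdef
    -- basic facts about the Cayley transform
    have hw1 : ∀ w : ℂ, 0 < w.re → w + 1 ≠ 0 := by
      intro w hw h
      have := congrArg Complex.re h
      simp at this
      linarith
    have hmem : ∀ w : ℂ, 0 < w.re → φ w ∈ ball (0 : ℂ) 1 := by
      intro w hw
      have hw1' := hw1 w hw
      rw [mem_ball_zero_iff]
      simp only [hφdef]
      rw [norm_div, div_lt_one (by simpa using hw1')]
      have hsq : ‖w - 1‖ ^ 2 < ‖w + 1‖ ^ 2 := by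
        rw [Complex.sq_norm, Complex.sq_norm, Complex.normSq_apply, Complex.normSq_apply]
        simp only [Complex.add_re, Complex.sub_re, Complex.add_im, Complex.sub_im,
          Complex.one_re, Complex.one_im]
        nlinarith
      nlinarith [norm_nonneg (w - 1), norm_nonneg (w + 1)]
    -- the key identity
    have hkey : ∀ w : ℂ, 0 < w.re →
        1 - P w = 2 * h₁ (φ w) * Complex.exp w / (w + 1) := by
      intro w hw
      have h1 : w + 1 ≠ 0 := hw1 w hw
      have hF1 : F₁ (φ w) = 2 / (w + 1) := by
        simp only [hφdef, F₁]; field_simp; ring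
      have hF2 : F₂ (φ w) = Complex.exp (-w) := by
        simp only [hφdef, F₂]
        congr 1
        field_simp
        ring
      have E := heq (φ w) (hmem w hw)
      rw [hF1, hF2, Complex.exp_neg] at E
      have ha : Complex.exp w ≠ 0 := Complex.exp_ne_zero w
      have E' : (w + 1) * Complex.exp w * (2 * (w + 1) * Complex.exp w)
          = (w + 1) * Complex.exp w *
            (4 * h₁ (φ w) * Complex.exp w ^ 2 + h₂ (φ w) * (w + 1) ^ 2) := by
        field_simp at E
        linear_combination (w + 1) * Complex.exp w * E
      have E2 := mul_left_cancel₀ (mul_ne_zero h1 ha) E'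
      simp only [hPdef, Complex.exp_neg]
      field_simp
      linear_combination E2
    -- absolute value of P
    have habsP : ∀ w : ℂ, ‖P w‖
        = Real.exp (-w.re) * ‖h₂ (φ w)‖ * ‖w + 1‖ / 2 := by
      intro w
      simp only [hPdef]
      rw [norm_div, norm_mul, norm_mul, Complex.norm_exp, Complex.neg_re, Complex.norm_two]
    have hPbound : ∀ w : ℂ, 0 < w.re →
        ‖P w‖ ≤ M₂ / 2 * (‖w + 1‖ * Real.exp (-w.re)) := by
      intro w hw
      rw [habsP w]
      have hb := hM₂ _ (hmem w hw)
      have he := Real.exp_pos (-w.re)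
      have ha := norm_nonneg (w + 1)
      have h3 : Real.exp (-w.re) * ‖h₂ (φ w)‖ * ‖w + 1‖
          ≤ Real.exp (-w.re) * M₂ * ‖w + 1‖ :=
        mul_le_mul_of_nonneg_right (mul_le_mul_of_nonneg_left hb he.le) ha
      nlinarith [norm_nonneg (h₂ (φ w))]
    have h1mP : ∀ w : ℂ, 0 < w.re →
        ‖1 - P w‖ ≤ 2 * M₁ * Real.exp w.re / ‖w + 1‖ := by
      intro w hw
      rw [hkey w hw, norm_div, norm_mul, norm_mul, Complex.norm_exp, Complex.norm_two]
      have hpos : 0 < ‖w + 1‖ := by simpa using hw1 w hw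
      gcongr
      exact hM₁ _ (hmem w hw)
    -- P is bounded on the right half-plane
    set C : ℝ := 1 + 2 * M₁ + M₂ / 2 with hCdef
    have hCpos : 0 < C := by positivity
    have hPC : ∀ w : ℂ, 0 < w.re → ‖P w‖ ≤ C := by
      intro w hw
      rcases le_or_gt (‖w + 1‖) (Real.exp w.re) with hc | hc
      · have h2 : ‖w + 1‖ * Real.exp (-w.re) ≤ 1 := by
          rw [Real.exp_neg]
          calc ‖w + 1‖ * (Real.exp w.re)⁻¹
              ≤ Real.exp w.re * (Real.exp w.re)⁻¹ := by
                gcongr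
            _ = 1 := mul_inv_cancel₀ (Real.exp_pos _).ne'
        have := hPbound w hw
        have h4 : M₂ / 2 * (‖w + 1‖ * Real.exp (-w.re)) ≤ M₂ / 2 * 1 :=
          mul_le_mul_of_nonneg_left h2 (by linarith)
        simp only [hCdef]
        linarith
      · have hb := h1mP w hw
        have hd : 2 * M₁ * Real.exp w.re / ‖w + 1‖ ≤ 2 * M₁ := by
          rw [div_le_iff₀ (lt_trans (Real.exp_pos _) hc)]
          nlinarith [Real.exp_pos w.re]
        have htri : ‖P w‖ ≤ 1 + ‖1 - P w‖ := by
          have h6 := norm_add_le 1 (P w - 1)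
          rw [show (1 : ℂ) + (P w - 1) = P w by ring, norm_one] at h6
          have h7 : ‖P w - 1‖ = ‖1 - P w‖ := norm_sub_rev _ _
          linarith
        simp only [hCdef]
        linarith
    -- Phragmén–Lindelöf setup
    set g : ℂ → ℂ := fun w => P (w + 1) * Complex.exp ((w + 1) / 2) with hgdef
    have hre2 : ∀ z : ℂ, ((z : ℂ) / 2).re = z.re / 2 := by
      intro z
      simp [Complex.div_re, Complex.normSq_apply]
    have habsg : ∀ w : ℂ, ‖g w‖ = ‖P (w + 1)‖ * Real.exp ((w.re + 1) / 2) := by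
      intro w
      simp only [hgdef]
      rw [norm_mul, Complex.norm_exp, hre2]
      simp [Complex.add_re]
    have hφdiff : DifferentiableOn ℂ φ {w : ℂ | 0 < w.re} :=
      DifferentiableOn.div ((differentiable_id.sub_const 1).differentiableOn)
        ((differentiable_id.add_const 1).differentiableOn) (fun w hw => hw1 w hw)
    have hPdiff : DifferentiableOn ℂ P {w : ℂ | 0 < w.re} := by
      apply DifferentiableOn.div_const
      apply DifferentiableOn.mul
      · exact DifferentiableOn.mul
          ((Complex.differentiable_exp.comp differentiable_neg).differentiableOn)
          (hd₂.comp hφdiff (fun w hw => hmem w hw))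
      · exact (differentiable_id.add_const 1).differentiableOn
    have hgdiff : DifferentiableOn ℂ g {w : ℂ | -1 < w.re} := by
      have h1 : DifferentiableOn ℂ (fun w : ℂ => P (w + 1)) {w : ℂ | -1 < w.re} := by
        apply hPdiff.comp ((differentiable_id.add_const 1).differentiableOn)
        intro w hw
        simp only [Set.mem_setOf_eq, Complex.add_re, Complex.one_re, id_eq] at *
        linarith
      exact h1.mul (((Complex.differentiable_exp.comp ((differentiable_id.add_const 1).div_const 2))).differentiableOn)
    have hsub : closure {z : ℂ | 0 < z.re} ⊆ {z : ℂ | -1 < z.re} := by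
      have h0 : closure {z : ℂ | 0 < z.re} ⊆ {z : ℂ | 0 ≤ z.re} :=
        closure_minimal (fun z hz => show (0:ℝ) ≤ z.re from le_of_lt hz)
          (isClosed_le continuous_const Complex.continuous_re)
      intro z hz
      have := h0 hz
      simp only [Set.mem_setOf_eq] at *
      linarith
    have hdcl : DiffContOnCl ℂ g {z : ℂ | 0 < z.re} :=
      ⟨hgdiff.mono (fun z hz => by simp only [Set.mem_setOf_eq] at *; linarith),
        (hgdiff.continuousOn).mono hsub⟩
    have hexp : ∃ c < (2 : ℝ), ∃ B, g =O[Bornology.cobounded ℂ ⊓ Filter.principal {z : ℂ | 0 < z.re}]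
        fun z => Real.exp (B * ‖z‖ ^ c) := by
      refine ⟨1, one_lt_two, 1, ?_⟩
      rw [Asymptotics.isBigO_iff]
      refine ⟨C * Real.exp 1, Filter.Eventually.filter_mono inf_le_right ?_⟩
      rw [Filter.eventually_principal]
      intro w hw
      simp only [Set.mem_setOf_eq] at hw
      have h0 : 0 < (w + 1).re := by
        simp only [Complex.add_re, Complex.one_re]; linarith
      rw [habsg w]
      have h1 : ‖P (w + 1)‖ ≤ C := hPC _ h0
      have h2 : Real.exp ((w.re + 1) / 2) ≤ Real.exp 1 * Real.exp (‖w‖) := by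
        rw [← Real.exp_add]
        apply Real.exp_le_exp.2
        have := Complex.re_le_norm w
        have := norm_nonneg w
        linarith
      have h3 : ‖Real.exp (1 * ‖w‖ ^ (1:ℝ))‖ = Real.exp (‖w‖) := by
        rw [Real.norm_eq_abs, abs_of_pos (Real.exp_pos _)]
        norm_num
      rw [h3]
      calc ‖P (w + 1)‖ * Real.exp ((w.re + 1) / 2)
          ≤ C * (Real.exp 1 * Real.exp (‖w‖)) := by
            apply mul_le_mul h1 h2 (Real.exp_pos _).le hCpos.le
        _ = C * Real.exp 1 * Real.exp (‖w‖) := by ring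
    have hre0 : Filter.Tendsto (fun x : ℝ => g x) Filter.atTop (nhds 0) := by
      apply squeeze_zero_norm' (a := fun x : ℝ => M₂ / 2 * ((x + 2) * Real.exp (-((x + 1) / 2))))
      · filter_upwards [Filter.eventually_ge_atTop (0 : ℝ)] with x hx
        have hx1 : (0:ℝ) < x + 1 := by linarith
        have hre : ((x : ℂ) + 1).re = x + 1 := by simp
        rw [habsg]
        have hb := hPbound ((x : ℂ) + 1) (by rw [hre]; exact hx1)
        have habs2 : ‖(x : ℂ) + 1 + 1‖ = x + 2 := by
          have : ((x : ℂ) + 1 + 1) = ((x + 2 : ℝ) : ℂ) := by push_cast; ring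
          rw [this, Complex.norm_real, Real.norm_eq_abs, abs_of_pos (by linarith)]
        rw [hre, habs2] at hb
        have he : Real.exp ((x + 1) / 2) > 0 := Real.exp_pos _
        calc ‖P ((x:ℂ) + 1)‖ * Real.exp (((x:ℂ).re + 1) / 2)
            ≤ M₂ / 2 * ((x + 2) * Real.exp (-(x + 1))) * Real.exp ((x + 1) / 2) := by
              have : ((x:ℂ).re + 1) / 2 = (x + 1) / 2 := by simp
              rw [this]
              exact mul_le_mul_of_nonneg_right hb he.le
          _ = M₂ / 2 * ((x + 2) * (Real.exp (-(x + 1)) * Real.exp ((x + 1) / 2))) := by ring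
          _ = M₂ / 2 * ((x + 2) * Real.exp (-((x + 1) / 2))) := by
              rw [← Real.exp_add, show -(x + 1) + (x + 1) / 2 = -((x + 1) / 2) by ring]
      · have T1 : Filter.Tendsto (fun u : ℝ => 2 * (u ^ 1 * Real.exp (-u)) + Real.exp (-u))
            Filter.atTop (nhds 0) := by
          have A := Real.tendsto_pow_mul_exp_neg_atTop_nhds_zero 1
          have B := Real.tendsto_exp_neg_atTop_nhds_zero
          have := (A.const_mul 2).add B
          simpa using this
        have T2 : Filter.Tendsto (fun x : ℝ => (x + 1) / 2) Filter.atTop Filter.atTop := by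
          apply Filter.Tendsto.atTop_div_const (by norm_num)
          exact Filter.tendsto_atTop_add_const_right _ 1 Filter.tendsto_id
        have T3 := T1.comp T2
        have heqf : (fun u : ℝ => 2 * (u ^ 1 * Real.exp (-u)) + Real.exp (-u)) ∘
            (fun x : ℝ => (x + 1) / 2) = fun x : ℝ => (x + 2) * Real.exp (-((x + 1) / 2)) := by
          funext x
          simp only [Function.comp_apply, pow_one]
          ring
        rw [heqf] at T3
        have := T3.const_mul (M₂ / 2)
        simpa using this
    have him : ∀ x : ℝ, ‖g ((x : ℂ) * Complex.I)‖ ≤ C * Real.exp (1 / 2) := by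
      intro x
      rw [habsg]
      have hre' : ((x : ℂ) * Complex.I).re = 0 := by simp
      rw [hre']
      have h0 : 0 < ((x : ℂ) * Complex.I + 1).re := by simp
      have h1 := hPC _ h0
      norm_num
      exact mul_le_mul_of_nonneg_right h1 (Real.exp_pos _).le
    have hPL : ∀ z : ℂ, 0 ≤ z.re → ‖g z‖ ≤ C * Real.exp (1 / 2) := fun z hz =>
      PhragmenLindelof.right_half_plane_of_tendsto_zero_on_real hdcl hexp hre0 him hz
    -- derive the contradiction
    clear hφdef hPdef hCdef hgdef
    clear_value φ P C g
    obtain ⟨a, hadef⟩ : ∃ a : ℝ, a = 24 * C + 1 := ⟨_, rfl⟩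
    obtain ⟨y, hydef⟩ : ∃ y : ℝ, y = 8 * (M₁ + 1) * Real.exp a + 1 := ⟨_, rfl⟩
    have hy0 : 0 < y := by rw [hydef]; positivity
    obtain ⟨v, hvdef⟩ : ∃ v : ℂ, v = (a : ℂ) + (y : ℂ) * Complex.I := ⟨_, rfl⟩
    have hvre : v.re = a := by simp [hvdef]
    have hva : 0 < v.re := by rw [hvre, hadef]; positivity
    -- bound on |P v| from Phragmén–Lindelöf
    have hw : (v - 1).re = a - 1 := by rw [Complex.sub_re, hvre]; simp
    have hga := hPL (v - 1) (by rw [hw]; nlinarith)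
    rw [habsg] at hga
    have hv1 : v - 1 + 1 = v := by ring
    rw [hv1, hw] at hga
    -- so |P v| * exp(a/2) ≤ C * exp(1/2)
    have hPv : ‖P v‖ ≤ C * Real.exp (1 / 2) / Real.exp (a / 2) := by
      rw [le_div_iff₀ (Real.exp_pos _)]
      calc ‖P v‖ * Real.exp (a / 2)
          = ‖P v‖ * Real.exp ((a - 1 + 1) / 2) := by norm_num
        _ ≤ C * Real.exp (1 / 2) := hga
    have hPv2 : ‖P v‖ < 1 / 2 := by
      have hglow : 1 + (a / 2 - 1 / 2) ≤ Real.exp (a / 2 - 1 / 2) := by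
        linarith [Real.add_one_le_exp (a / 2 - 1 / 2)]
      have hquot : C * Real.exp (1 / 2) / Real.exp (a / 2) = C / Real.exp (a / 2 - 1 / 2) := by
        rw [Real.exp_sub, div_div_eq_mul_div]
      have hlt : C / Real.exp (a / 2 - 1 / 2) < 1 / 2 := by
        rw [div_lt_iff₀ (Real.exp_pos _)]
        have h12 : (12 : ℝ) * C + 1 ≤ Real.exp (a / 2 - 1 / 2) := by
          rw [hadef] at hglow ⊢
          linarith
        nlinarith
      rw [hquot] at hPv
      linarith
    have h1Pv : ‖1 - P v‖ < 1 / 2 := by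
      have hb := h1mP v hva
      rw [hvre] at hb
      have him' : (v + 1).im = y := by simp [hvdef]
      have habsv : y ≤ ‖v + 1‖ := by
        have h8 := Complex.abs_im_le_norm (v + 1)
        rw [him'] at h8
        calc y = |y| := (abs_of_pos hy0).symm
          _ ≤ _ := h8
      have hpos : 0 < ‖v + 1‖ := lt_of_lt_of_le hy0 habsv
      have hmono : 2 * M₁ * Real.exp a / ‖v + 1‖ ≤ 2 * M₁ * Real.exp a / y := by
        gcongr
      have hlast : 2 * M₁ * Real.exp a / y < 1 / 2 := by
        rw [div_lt_iff₀ hy0]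
        have he := Real.exp_pos a
        rw [hydef]
        nlinarith
      linarith
    have hsum : (1 : ℝ) ≤ ‖1 - P v‖ + ‖P v‖ := by
      have h6 := norm_add_le (1 - P v) (P v)
      rw [show (1 : ℂ) - P v + P v = 1 by ring, norm_one] at h6
      exact h6
    linarith
end
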